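/- arXiv:1808.08074 — 6 statements merged into one kernel-verified Lean document; each statement's English description precedes it below -/
import Mathlib

section
/- For the Schur polynomial $s_\lambda(w_1,\dots,w_{\kappa+1})$ in $\kappa+1$ variables and rectangular partitions, the Plücker-type identity holds: $s_{(i^a,1)} \cdot s_{((i-1)^a)} - s_{((i-1)^a,1)} \cdot s_{(i^a)} = s_{((i-1)^{a-1})} \cdot s_{(i^{a+1})}$, for all integers $i \ge 1$ and $1 \le a \le \kappa$, where $(c^a)$ denotes the partition with $a$ parts equal to $c$ and $(c^a,1)$ the partition $(c,\dots,c,1)$. -/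
set_option maxHeartbeats 2000000

namespace SchurAux

open Matrix Equiv

variable {N : ℕ}

/-- `Om X u v` : determinant of the matrix with rows `u, v, X 0, ..., X (N-1)`. -/
noncomputable def Om (X : Fin N → (Fin (N+2) → ℝ)) (u v : Fin (N+2) → ℝ) : ℝ :=
  Matrix.det (Matrix.of (Fin.cons u (Fin.cons v X)))

lemma cons2_mk {α : Type*} (u v : α) (X : Fin N → α) (m : ℕ) (hm : m + 2 < N + 2) :
    (Fin.cons u (Fin.cons v X) : Fin (N+2) → α) ⟨m+2, hm⟩ = X ⟨m, by omega⟩ := by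
  have h1 : (⟨m+2, hm⟩ : Fin (N+2)) = Fin.succ (Fin.succ ⟨m, by omega⟩) := rfl
  rw [h1, Fin.cons_succ, Fin.cons_succ]

lemma cons2_zero {α : Type*} (u v : α) (X : Fin N → α) (hm : 0 < N + 2) :
    (Fin.cons u (Fin.cons v X) : Fin (N+2) → α) ⟨0, hm⟩ = u := by
  rw [Fin.mk_zero, Fin.cons_zero]

lemma cons2_one {α : Type*} (u v : α) (X : Fin N → α) (hm : 1 < N + 2) :
    (Fin.cons u (Fin.cons v X) : Fin (N+2) → α) ⟨1, hm⟩ = v := by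
  rw [Fin.mk_one]
  have : (1 : Fin (N+2)) = Fin.succ 0 := rfl
  rw [this, Fin.cons_succ, Fin.cons_zero]

lemma of_cons_eq_updateRow (X : Fin N → (Fin (N+2) → ℝ)) (u v : Fin (N+2) → ℝ) :
    Matrix.of (Fin.cons u (Fin.cons v X)) =
      Matrix.updateRow (Matrix.of (Fin.cons 0 (Fin.cons v X))) 0 u := by
  ext r c
  by_cases h : r = 0
  · subst h; rw [Matrix.updateRow_self]; rfl
  · rw [Matrix.updateRow_ne h]
    obtain ⟨m, hm⟩ := r
    cases m with
    | zero => exact absurd (Fin.mk_zero) h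
    | succ t =>
      have h1 : (⟨t+1, hm⟩ : Fin (N+2)) = Fin.succ ⟨t, by omega⟩ := rfl
      simp only [Matrix.of_apply, h1, Fin.cons_succ]

lemma Om_zero_left (X : Fin N → (Fin (N+2) → ℝ)) (v : Fin (N+2) → ℝ) :
    Om X 0 v = 0 := by
  apply Matrix.det_eq_zero_of_row_eq_zero 0
  intro j
  simp [Om]

lemma Om_add_left (X : Fin N → (Fin (N+2) → ℝ)) (u u' v : Fin (N+2) → ℝ) :
    Om X (u + u') v = Om X u v + Om X u' v := by
  unfold Om
  rw [of_cons_eq_updateRow X u v, of_cons_eq_updateRow X u' v,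
    of_cons_eq_updateRow X (u + u') v, Matrix.det_updateRow_add]

lemma Om_smul_left (X : Fin N → (Fin (N+2) → ℝ)) (r : ℝ) (u v : Fin (N+2) → ℝ) :
    Om X (r • u) v = r * Om X u v := by
  unfold Om
  rw [of_cons_eq_updateRow X u v, of_cons_eq_updateRow X (r • u) v,
    Matrix.det_updateRow_smul]

lemma Om_sum_left {ι : Type*} (X : Fin N → (Fin (N+2) → ℝ)) (s : Finset ι)
    (g : ι → ℝ) (Y : ι → (Fin (N+2) → ℝ)) (v : Fin (N+2) → ℝ) :
    Om X (∑ t ∈ s, g t • Y t) v = ∑ t ∈ s, g t * Om X (Y t) v := by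
  classical
  induction s using Finset.induction with
  | empty => simp [Om_zero_left]
  | @insert x s hx ih =>
    rw [Finset.sum_insert hx, Finset.sum_insert hx, Om_add_left, Om_smul_left, ih]

lemma Om_swap (X : Fin N → (Fin (N+2) → ℝ)) (u v : Fin (N+2) → ℝ) :
    Om X u v = - Om X v u := by
  have h : ∀ r : Fin (N+2), (Fin.cons u (Fin.cons v X) : Fin (N+2) → Fin (N+2) → ℝ) r
      = (Fin.cons v (Fin.cons u X) : Fin (N+2) → Fin (N+2) → ℝ) (Equiv.swap 0 1 r) := by
    intro r
    refine Fin.cases ?_ (fun t => ?_) r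
    · rw [Fin.cons_zero, Equiv.swap_apply_left]
      rw [show (1 : Fin (N+2)) = Fin.succ 0 from rfl, Fin.cons_succ, Fin.cons_zero]
    · refine Fin.cases ?_ (fun s => ?_) t
      · rw [Fin.cons_succ, show Fin.succ (0 : Fin (N+1)) = 1 from rfl,
          Equiv.swap_apply_right, Fin.cons_zero, Fin.cons_zero]
      · have h0 : (s.succ.succ : Fin (N+2)) ≠ 0 := Fin.succ_ne_zero _
        have h1 : (s.succ.succ : Fin (N+2)) ≠ 1 := by
          rw [show (1 : Fin (N+2)) = Fin.succ 0 from rfl]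
          intro hc
          exact Fin.succ_ne_zero _ (Fin.succ_injective _ hc)
        rw [Equiv.swap_apply_of_ne_of_ne h0 h1, Fin.cons_succ, Fin.cons_succ,
          Fin.cons_succ, Fin.cons_succ]
  have hM : Matrix.of (Fin.cons u (Fin.cons v X)) =
      (Matrix.of (Fin.cons v (Fin.cons u X))).submatrix (Equiv.swap 0 1) id := by
    ext r c
    rw [Matrix.submatrix_apply, Matrix.of_apply, Matrix.of_apply, h r]
    rfl
  unfold Om
  rw [hM, Matrix.det_permute, Equiv.Perm.sign_swap (by simp [Fin.ext_iff])]
  simp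

lemma Om_left_X (X : Fin N → (Fin (N+2) → ℝ)) (t : Fin N) (v : Fin (N+2) → ℝ) :
    Om X (X t) v = 0 := by
  unfold Om
  have hlt : (t : ℕ) + 2 < N + 2 := by omega
  refine Matrix.det_zero_of_row_eq (i := (0 : Fin (N+2))) (j := ⟨(t:ℕ)+2, hlt⟩)
    (by simp [Fin.ext_iff]) ?_
  show (Fin.cons (X t) (Fin.cons v X) : Fin (N+2) → Fin (N+2) → ℝ) 0
      = (Fin.cons (X t) (Fin.cons v X) : Fin (N+2) → Fin (N+2) → ℝ) ⟨(t:ℕ)+2, hlt⟩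
  rw [Fin.cons_zero, cons2_mk]

lemma plucker (X : Fin N → (Fin (N+2) → ℝ)) (A B C D : Fin (N+2) → ℝ) :
    Om X A B * Om X C D - Om X A C * Om X B D + Om X A D * Om X B C = 0 := by
  classical
  by_cases hX : LinearIndependent ℝ X
  case neg =>
    have hzero : ∀ u v : Fin (N+2) → ℝ, Om X u v = 0 := by
      intro u v
      have hdep : ¬ LinearIndependent ℝ (Fin.cons u (Fin.cons v X) : Fin (N+2) → _) := by
        intro h
        apply hX
        have h2 := h.comp (fun t : Fin N => t.succ.succ)
          (fun s t hst => Fin.succ_injective _ (Fin.succ_injective _ hst))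
        have heq : ((Fin.cons u (Fin.cons v X) : Fin (N+2) → _) ∘
            fun t : Fin N => t.succ.succ) = X := by
          funext t; simp [Function.comp, Fin.cons_succ]
        rwa [heq] at h2
      exact AlternatingMap.map_linearDependent _ _ hdep
    simp [hzero]
  case pos =>
    set y : Fin (N+3) → (Fin (N+2) → ℝ) := Fin.cons A (Fin.cons B (Fin.cons C X)) with hy
    have hdep : ¬ LinearIndependent ℝ y := by
      intro h
      have hcard := h.fintype_card_le_finrank
      rw [Module.finrank_fintype_fun_eq_card] at hcard
      simp [Fintype.card_fin] at hcard
    obtain ⟨g, hsum, i0, hi0⟩ := Fintype.not_linearIndependent_iff.mp hdep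
    rw [Fin.sum_univ_succ, Fin.sum_univ_succ, Fin.sum_univ_succ] at hsum
    simp only [hy, Fin.cons_zero, Fin.cons_succ] at hsum
    have star : ∀ v, g 0 * Om X A v + g (Fin.succ 0) * Om X B v
        + g (Fin.succ 0).succ * Om X C v = 0 := by
      intro v
      have h0 : Om X (g 0 • A + (g (Fin.succ 0) • B + (g (Fin.succ 0).succ • C +
          ∑ x : Fin N, g x.succ.succ.succ • X x))) v = 0 := by
        rw [hsum]; exact Om_zero_left X v
      rw [Om_add_left, Om_add_left, Om_add_left, Om_smul_left, Om_smul_left, Om_smul_left,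
        Om_sum_left] at h0
      simp only [Om_left_X, mul_zero, Finset.sum_const_zero, add_zero] at h0
      linarith
    have h3 : ¬ (g 0 = 0 ∧ g (Fin.succ 0) = 0 ∧ g (Fin.succ 0).succ = 0) := by
      rintro ⟨h0, h1, h2⟩
      rw [h0, h1, h2] at hsum
      simp only [zero_smul, zero_add] at hsum
      have hall := Fintype.linearIndependent_iff.mp hX _ hsum
      apply hi0
      obtain ⟨m, hm⟩ := i0
      match m, hm with
      | 0, hm => rw [show (⟨0, hm⟩ : Fin (N+3)) = 0 from Fin.mk_zero]; exact h0
      | 1, hm =>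
        rw [show (⟨1, hm⟩ : Fin (N+3)) = Fin.succ 0 from by
          apply Fin.ext; simp]
        exact h1
      | 2, hm =>
        rw [show (⟨2, hm⟩ : Fin (N+3)) = (Fin.succ 0).succ from by
          apply Fin.ext; simp; exact (Nat.mod_eq_of_lt hm).symm]
        exact h2
      | (t+3), hm => exact hall ⟨t, by omega⟩
    set P := Om X A B with hP
    set Q := Om X A C with hQ
    set R := Om X A D with hR
    set S := Om X B C with hS
    set T := Om X B D with hT
    set U := Om X C D with hU
    have EA := star A
    have EB := star B
    have EC := star C
    have ED := star D
    have hAA : Om X A A = 0 := by have := Om_swap X A A; linarith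
    have hBB : Om X B B = 0 := by have := Om_swap X B B; linarith
    have hCC : Om X C C = 0 := by have := Om_swap X C C; linarith
    rw [hAA, Om_swap X B A, Om_swap X C A] at EA
    rw [hBB, Om_swap X C B] at EB
    rw [hCC] at EC
    by_cases h0 : g 0 = 0
    · by_cases h1 : g (Fin.succ 0) = 0
      · have h2 : g (Fin.succ 0).succ ≠ 0 := fun h2 => h3 ⟨h0, h1, h2⟩
        have hgoal : g (Fin.succ 0).succ * (P * U - Q * T + R * S) = 0 := by
          linear_combination P * ED + T * EA - R * EB
        rcases mul_eq_zero.mp hgoal with h | h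
        · exact absurd h h2
        · linarith
      · have hgoal : g (Fin.succ 0) * (P * U - Q * T + R * S) = 0 := by
          linear_combination (-U) * EA + R * EC + (-Q) * ED
        rcases mul_eq_zero.mp hgoal with h | h
        · exact absurd h h1
        · linarith
    · have hgoal : g 0 * (P * U - Q * T + R * S) = 0 := by
        linear_combination U * EB - T * EC + S * ED
      rcases mul_eq_zero.mp hgoal with h | h
      · exact absurd h h0
      · linarith


lemma val_mk' {n m : ℕ} (h : m < n) : ((⟨m, h⟩ : Fin n) : ℕ) = m := rfl

def sig1 (N a : ℕ) (h : a < N+2) : Equiv.Perm (Fin (N+2)) :=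
  (Fin.cycleRange ⟨a, h⟩) * Equiv.swap 0 ⟨a, h⟩

def sig2 (N a : ℕ) (h : a < N+2) : Equiv.Perm (Fin (N+2)) :=
  (Fin.cycleRange ⟨a, h⟩) * (Fin.cycleRange ⟨a, h⟩)

lemma sig1_apply (N a : ℕ) (h : a < N+2) (ha : 1 ≤ a) (m : ℕ) (hm : m < N+2) :
    ((sig1 N a h ⟨m, hm⟩ : Fin (N+2)) : ℕ) =
      if m = 0 then 0 else if m < a then m+1 else if m = a then 1 else m := by
  unfold sig1
  rw [Equiv.Perm.mul_apply]
  rcases eq_or_ne m 0 with rfl | hm0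
  · rw [Fin.mk_zero, Equiv.swap_apply_left, Fin.cycleRange_self]
    simp
  · rcases eq_or_ne m a with rfl | hma
    · rw [show (⟨m, hm⟩ : Fin (N+2)) = ⟨m, h⟩ from rfl, Equiv.swap_apply_right]
      rw [Fin.coe_cycleRange_of_lt (show (0 : Fin (N+2)) < ⟨m, h⟩ by
        simp [Fin.lt_def]; omega)]
      simp only [Fin.val_zero]
      split_ifs <;> omega
    · have h0 : (⟨m, hm⟩ : Fin (N+2)) ≠ 0 := by
        simp [Fin.ext_iff]; omega
      have hA : (⟨m, hm⟩ : Fin (N+2)) ≠ ⟨a, h⟩ := by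
        simp [Fin.ext_iff]; omega
      rw [Equiv.swap_apply_of_ne_of_ne h0 hA]
      rcases lt_or_gt_of_ne hma with hlt | hgt
      · rw [Fin.coe_cycleRange_of_lt (show (⟨m, hm⟩ : Fin (N+2)) < ⟨a, h⟩ from
          Fin.mk_lt_mk.mpr hlt), val_mk']
        split_ifs <;> omega
      · rw [Fin.cycleRange_of_gt (show (⟨a, h⟩ : Fin (N+2)) < ⟨m, hm⟩ from
          Fin.mk_lt_mk.mpr hgt), val_mk']
        split_ifs <;> omega

lemma sig2_apply (N a : ℕ) (h : a < N+2) (ha : 1 ≤ a) (m : ℕ) (hm : m < N+2) :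
    ((sig2 N a h ⟨m, hm⟩ : Fin (N+2)) : ℕ) =
      if m < a-1 then m+2 else if m = a-1 then 0 else if m = a then 1 else m := by
  unfold sig2
  rw [Equiv.Perm.mul_apply]
  rcases lt_trichotomy m (a-1) with hlt | heq | hgt
  · have h1 : (⟨m, hm⟩ : Fin (N+2)) < ⟨a, h⟩ := Fin.mk_lt_mk.mpr (by omega)
    have hv1 : ((Fin.cycleRange ⟨a, h⟩ ⟨m, hm⟩ : Fin (N+2)) : ℕ) = m + 1 :=
      Fin.coe_cycleRange_of_lt h1
    have h2 : (Fin.cycleRange ⟨a, h⟩ ⟨m, hm⟩ : Fin (N+2)) < ⟨a, h⟩ := by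
      rw [Fin.lt_def, hv1, val_mk']; omega
    rw [Fin.coe_cycleRange_of_lt h2, hv1]
    split_ifs <;> omega
  · have h1 : (⟨m, hm⟩ : Fin (N+2)) < ⟨a, h⟩ := Fin.mk_lt_mk.mpr (by omega)
    have hv1 : ((Fin.cycleRange ⟨a, h⟩ ⟨m, hm⟩ : Fin (N+2)) : ℕ) = m + 1 :=
      Fin.coe_cycleRange_of_lt h1
    have h2 : (Fin.cycleRange ⟨a, h⟩ ⟨m, hm⟩ : Fin (N+2)) = ⟨a, h⟩ := by
      apply Fin.ext; rw [hv1, val_mk']; omega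
    rw [h2, Fin.cycleRange_self]
    simp only [Fin.val_zero]
    split_ifs <;> omega
  · rcases eq_or_ne m a with rfl | hma
    · have h2 : (⟨m, hm⟩ : Fin (N+2)) = ⟨m, h⟩ := rfl
      rw [h2, Fin.cycleRange_self]
      rw [Fin.coe_cycleRange_of_lt (show (0 : Fin (N+2)) < ⟨m, h⟩ by
        simp [Fin.lt_def]; omega)]
      simp only [Fin.val_zero]
      split_ifs <;> omega
    · have hgt2 : (⟨a, h⟩ : Fin (N+2)) < ⟨m, hm⟩ := Fin.mk_lt_mk.mpr (by omega)
      rw [Fin.cycleRange_of_gt hgt2, Fin.cycleRange_of_gt hgt2, val_mk']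
      split_ifs <;> omega

/-- exponents of the common rows. -/
def xE (N i a t : ℕ) : ℕ := if t < a - 1 then i + N - t else N - 1 - t

noncomputable def pw (N : ℕ) (w : Fin (N+2) → ℝ) (e : ℕ) : Fin (N+2) → ℝ := fun r => w r ^ e

noncomputable def Xv (N i a : ℕ) (w : Fin (N+2) → ℝ) : Fin N → (Fin (N+2) → ℝ) :=
  fun t => pw N w (xE N i a (t : ℕ))

lemma consG (N i a : ℕ) (w : Fin (N+2) → ℝ) (e1 e2 : ℕ) (j : Fin (N+2)) :
    (Fin.cons (pw N w e1) (Fin.cons (pw N w e2) (Xv N i a w)) : Fin (N+2) → Fin (N+2) → ℝ) j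
      = pw N w (if (j:ℕ) = 0 then e1 else if (j:ℕ) = 1 then e2 else xE N i a ((j:ℕ) - 2)) := by
  obtain ⟨m, hm⟩ := j
  match m, hm with
  | 0, hm => rw [cons2_zero]; simp
  | 1, hm => rw [cons2_one]; simp
  | (t+2), hm =>
    rw [cons2_mk]
    simp [Xv]

lemma key (N i a : ℕ) (w : Fin (N+2) → ℝ) (E : Fin (N+2) → ℕ) (σ : Equiv.Perm (Fin (N+2)))
    (e1 e2 : ℕ)
    (hE : ∀ j, pw N w (E j) =
      (Fin.cons (pw N w e1) (Fin.cons (pw N w e2) (Xv N i a w)) : Fin (N+2) → Fin (N+2) → ℝ) (σ j)) :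
    Matrix.det (Matrix.of fun r j => w r ^ E j)
      = ((Equiv.Perm.sign σ : ℤ) : ℝ) * Om (Xv N i a w) (pw N w e1) (pw N w e2) := by
  rw [show (Matrix.of fun r j => w r ^ E j) = (Matrix.of fun j r => w r ^ E j)ᵀ from rfl,
    Matrix.det_transpose]
  have h2 : (Matrix.of fun j r => w r ^ E j) =
      (Matrix.of (Fin.cons (pw N w e1) (Fin.cons (pw N w e2) (Xv N i a w)))).submatrix σ id := by
    ext j r
    rw [Matrix.submatrix_apply, Matrix.of_apply, Matrix.of_apply, ← hE j]
    rfl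
  rw [h2, Matrix.det_permute]
  unfold Om
  norm_cast

end SchurAux


/-- Schur polynomial as ratio of determinants in `κ+1` variables. -/
noncomputable def schur (κ : ℕ) (lam : Fin (κ+1) → ℕ) (w : Fin (κ+1) → ℝ) : ℝ :=
  (Matrix.det (Matrix.of fun i j : Fin (κ+1) => w i ^ (lam j + (κ - (j:ℕ))))) /
  (Matrix.det (Matrix.of fun i j : Fin (κ+1) => w i ^ (κ - (j:ℕ))))

/-- The rectangular partition `(c^a)`, padded with zeros. -/
def rect (κ c a : ℕ) : Fin (κ+1) → ℕ := fun j => if (j:ℕ) < a then c else 0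

/-- The partition `(c^a, 1)`, padded with zeros. -/
def rectOne (κ c a : ℕ) : Fin (κ+1) → ℕ :=
  fun j => if (j:ℕ) < a then c else if (j:ℕ) = a then 1 else 0

theorem stmt0 (κ : ℕ) (hκ : 1 ≤ κ) (i a : ℕ) (hi : 1 ≤ i) (ha1 : 1 ≤ a) (ha2 : a ≤ κ)
    (w : Fin (κ+1) → ℝ) :
    schur κ (rectOne κ i a) w * schur κ (rect κ (i-1) a) w
      - schur κ (rectOne κ (i-1) a) w * schur κ (rect κ i a) w
      = schur κ (rect κ (i-1) (a-1)) w * schur κ (rect κ i (a+1)) w := by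
  obtain ⟨k, rfl⟩ : ∃ k, κ = k + 1 := ⟨κ - 1, by omega⟩
  clear hκ
  have ha' : a < k + 2 := by omega
  open SchurAux in
  -- abbreviations
  have hyp1 : ∀ j : Fin (k+2), pw k w (rectOne (k+1) i a j + ((k+1) - (j:ℕ))) =
      (Fin.cons (pw k w (i+(k+1))) (Fin.cons (pw k w ((k+1)-a+1)) (Xv k i a w)) :
        Fin (k+2) → Fin (k+2) → ℝ) (sig1 k a ha' j) := by
    intro j
    obtain ⟨m, hm⟩ := j
    rw [consG]
    refine congrArg (pw k w) ?_
    rw [sig1_apply k a ha' ha1 m hm]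
    simp only [rectOne, xE, val_mk']
    split_ifs <;> first | (exact (by assumption : False).elim) | omega
  have hyp2 : ∀ j : Fin (k+2), pw k w (rect (k+1) (i-1) a j + ((k+1) - (j:ℕ))) =
      (Fin.cons (pw k w (i+(k+1)-a)) (Fin.cons (pw k w ((k+1)-a)) (Xv k i a w)) :
        Fin (k+2) → Fin (k+2) → ℝ) (sig2 k a ha' j) := by
    intro j
    obtain ⟨m, hm⟩ := j
    rw [consG]
    refine congrArg (pw k w) ?_
    rw [sig2_apply k a ha' ha1 m hm]
    simp only [rect, xE, val_mk']
    split_ifs <;> first | (exact (by assumption : False).elim) | omega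
  have hyp3 : ∀ j : Fin (k+2), pw k w (rectOne (k+1) (i-1) a j + ((k+1) - (j:ℕ))) =
      (Fin.cons (pw k w (i+(k+1)-a)) (Fin.cons (pw k w ((k+1)-a+1)) (Xv k i a w)) :
        Fin (k+2) → Fin (k+2) → ℝ) (sig2 k a ha' j) := by
    intro j
    obtain ⟨m, hm⟩ := j
    rw [consG]
    refine congrArg (pw k w) ?_
    rw [sig2_apply k a ha' ha1 m hm]
    simp only [rectOne, xE, val_mk']
    split_ifs <;> first | (exact (by assumption : False).elim) | omega
  have hyp4 : ∀ j : Fin (k+2), pw k w (rect (k+1) i a j + ((k+1) - (j:ℕ))) =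
      (Fin.cons (pw k w (i+(k+1))) (Fin.cons (pw k w ((k+1)-a)) (Xv k i a w)) :
        Fin (k+2) → Fin (k+2) → ℝ) (sig1 k a ha' j) := by
    intro j
    obtain ⟨m, hm⟩ := j
    rw [consG]
    refine congrArg (pw k w) ?_
    rw [sig1_apply k a ha' ha1 m hm]
    simp only [rect, xE, val_mk']
    split_ifs <;> first | (exact (by assumption : False).elim) | omega
  have hyp5 : ∀ j : Fin (k+2), pw k w (rect (k+1) (i-1) (a-1) j + ((k+1) - (j:ℕ))) =
      (Fin.cons (pw k w ((k+1)-a+1)) (Fin.cons (pw k w ((k+1)-a)) (Xv k i a w)) :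
        Fin (k+2) → Fin (k+2) → ℝ) (sig2 k a ha' j) := by
    intro j
    obtain ⟨m, hm⟩ := j
    rw [consG]
    refine congrArg (pw k w) ?_
    rw [sig2_apply k a ha' ha1 m hm]
    simp only [rect, xE, val_mk']
    split_ifs <;> first | (exact (by assumption : False).elim) | omega
  have hyp6 : ∀ j : Fin (k+2), pw k w (rect (k+1) i (a+1) j + ((k+1) - (j:ℕ))) =
      (Fin.cons (pw k w (i+(k+1))) (Fin.cons (pw k w (i+(k+1)-a)) (Xv k i a w)) :
        Fin (k+2) → Fin (k+2) → ℝ) (sig1 k a ha' j) := by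
    intro j
    obtain ⟨m, hm⟩ := j
    rw [consG]
    refine congrArg (pw k w) ?_
    rw [sig1_apply k a ha' ha1 m hm]
    simp only [rect, xE, val_mk']
    split_ifs <;> first | (exact (by assumption : False).elim) | omega
  have H1 := key k i a w _ (sig1 k a ha') _ _ hyp1
  have H2 := key k i a w _ (sig2 k a ha') _ _ hyp2
  have H3 := key k i a w _ (sig2 k a ha') _ _ hyp3
  have H4 := key k i a w _ (sig1 k a ha') _ _ hyp4
  have H5 := key k i a w _ (sig2 k a ha') _ _ hyp5
  have H6 := key k i a w _ (sig1 k a ha') _ _ hyp6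
  have HP := plucker (Xv k i a w) (pw k w (i+(k+1))) (pw k w (i+(k+1)-a))
    (pw k w ((k+1)-a+1)) (pw k w ((k+1)-a))
  have hNum :
      Matrix.det (Matrix.of fun r j : Fin (k+1+1) => w r ^ (rectOne (k+1) i a j + ((k+1) - (j:ℕ))))
        * Matrix.det (Matrix.of fun r j : Fin (k+1+1) => w r ^ (rect (k+1) (i-1) a j + ((k+1) - (j:ℕ))))
      - Matrix.det (Matrix.of fun r j : Fin (k+1+1) => w r ^ (rectOne (k+1) (i-1) a j + ((k+1) - (j:ℕ))))
        * Matrix.det (Matrix.of fun r j : Fin (k+1+1) => w r ^ (rect (k+1) i a j + ((k+1) - (j:ℕ))))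
      = Matrix.det (Matrix.of fun r j : Fin (k+1+1) => w r ^ (rect (k+1) (i-1) (a-1) j + ((k+1) - (j:ℕ))))
        * Matrix.det (Matrix.of fun r j : Fin (k+1+1) => w r ^ (rect (k+1) i (a+1) j + ((k+1) - (j:ℕ)))) := by
    rw [show (Matrix.of fun r j : Fin (k+1+1) => w r ^ (rectOne (k+1) i a j + ((k+1) - (j:ℕ))))
        = (Matrix.of fun r j : Fin (k+2) => w r ^ ((fun j : Fin (k+2) => rectOne (k+1) i a j + ((k+1) - (j:ℕ))) j)) from rfl, H1]
    rw [show (Matrix.of fun r j : Fin (k+1+1) => w r ^ (rect (k+1) (i-1) a j + ((k+1) - (j:ℕ))))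
        = (Matrix.of fun r j : Fin (k+2) => w r ^ ((fun j : Fin (k+2) => rect (k+1) (i-1) a j + ((k+1) - (j:ℕ))) j)) from rfl, H2]
    rw [show (Matrix.of fun r j : Fin (k+1+1) => w r ^ (rectOne (k+1) (i-1) a j + ((k+1) - (j:ℕ))))
        = (Matrix.of fun r j : Fin (k+2) => w r ^ ((fun j : Fin (k+2) => rectOne (k+1) (i-1) a j + ((k+1) - (j:ℕ))) j)) from rfl, H3]
    rw [show (Matrix.of fun r j : Fin (k+1+1) => w r ^ (rect (k+1) i a j + ((k+1) - (j:ℕ))))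
        = (Matrix.of fun r j : Fin (k+2) => w r ^ ((fun j : Fin (k+2) => rect (k+1) i a j + ((k+1) - (j:ℕ))) j)) from rfl, H4]
    rw [show (Matrix.of fun r j : Fin (k+1+1) => w r ^ (rect (k+1) (i-1) (a-1) j + ((k+1) - (j:ℕ))))
        = (Matrix.of fun r j : Fin (k+2) => w r ^ ((fun j : Fin (k+2) => rect (k+1) (i-1) (a-1) j + ((k+1) - (j:ℕ))) j)) from rfl, H5]
    rw [show (Matrix.of fun r j : Fin (k+1+1) => w r ^ (rect (k+1) i (a+1) j + ((k+1) - (j:ℕ))))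
        = (Matrix.of fun r j : Fin (k+2) => w r ^ ((fun j : Fin (k+2) => rect (k+1) i (a+1) j + ((k+1) - (j:ℕ))) j)) from rfl, H6]
    linear_combination
      (-(((Equiv.Perm.sign (sig1 k a ha') : ℤ) : ℝ) * ((Equiv.Perm.sign (sig2 k a ha') : ℤ) : ℝ))) * HP
  simp only [schur]
  rw [div_mul_div_comm, div_mul_div_comm, div_mul_div_comm, div_sub_div_same, hNum]
end

section
/- For integers $\kappa \ge 1$, $1 \le a \le \kappa$, $i \ge 1$ and $0<q<1$, define $\varphi_i^{(a)} = \frac{q^{a-1}(1-q)^2(1-q^i)(1-q^{i+\kappa+1})(1+q^{i+a})}{(1-q^{\kappa+1})(1-q^{i+a-1})(1-q^{i+a})(1-q^{i+a+1})}$ (with $\varphi_0^{(a)} = \delta_{a,1}$ obtained by setting $i=0$) and $y_i^{(a)} = \frac{q^{-i}(1-q^i)(1-q^{i+\kappa+1})}{(1-q^a)(1-q^{\kappa+1-a})}$. Then for all $i \ge 1$ and $1 \le a \le \kappa$, the difference equation $\varphi_{i-1}^{(a)} - 2\varphi_i^{(a)} + \varphi_{i+1}^{(a)} = \sum_{b=1}^{\kappa}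 C_{ab}\, (y_i^{(b)})^{-1} \varphi_i^{(b)}$ holds, where $C_{ab} = 2\delta_{a,b} - \delta_{a,b-1} - \delta_{a,b+1}$ is the Cartan matrix of $sl_{\kappa+1}$. -/
set_option maxHeartbeats 1600000

/-- The scaled vacancy `φ_i^{(a)}` under principal specialization,
with boundary value `φ_0^{(a)} = δ_{a,1}`. -/
noncomputable def phi (κ : ℕ) (q : ℝ) (a i : ℕ) : ℝ :=
  if i = 0 then (if a = 1 then 1 else 0) else
    q ^ (a-1) * (1-q)^2 * (1 - q ^ i) * (1 - q ^ (i+κ+1)) * (1 + q ^ (i+a)) /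
      ((1 - q ^ (κ+1)) * (1 - q ^ (i+a-1)) * (1 - q ^ (i+a)) * (1 - q ^ (i+a+1)))

/-- `y_i^{(a)}` under principal specialization. -/
noncomputable def yy (κ : ℕ) (q : ℝ) (a i : ℕ) : ℝ :=
  (q ^ i)⁻¹ * (1 - q ^ i) * (1 - q ^ (i+κ+1)) / ((1 - q ^ a) * (1 - q ^ (κ+1-a)))

/-- Cartan matrix of `sl_{κ+1}`: `C_{ab} = 2δ_{a,b} - δ_{a,b-1} - δ_{a,b+1}`. -/
def cartan (a b : ℕ) : ℝ :=
  (if a = b then 2 else 0) - (if a + 1 = b then 1 else 0) - (if a = b + 1 then 1 else 0)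

lemma key (q : ℝ) (hq0 : 0 < q) (hq1 : q < 1) : ∀ n : ℕ, 1 ≤ n → 1 - q ^ n ≠ 0 := by
  intro n hn
  have : q ^ n < 1 := pow_lt_one₀ hq0.le hq1 (by omega)
  linarith

lemma phi_eval (κ : ℕ) (q : ℝ) (a j e0 e1 e2 e3 : ℕ) (h0 : a - 1 = e0)
    (h1 : j + 1 + a - 1 = e1) (h2 : j + 1 + a = e2) (h3 : j + 1 + a + 1 = e3) :
    phi κ q a (j+1) = q ^ e0 * (1-q)^2 * (1 - q ^ (j+1)) * (1 - q ^ (j+1+κ+1)) * (1 + q ^ e2) /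
      ((1 - q ^ (κ+1)) * (1 - q ^ e1) * (1 - q ^ e2) * (1 - q ^ e3)) := by
  rw [phi, if_neg (show j + 1 ≠ 0 by omega), h0, h1, h3, h2]

lemma phi_eval' (κ : ℕ) (q : ℝ) (a j e0 e1 e2 e3 : ℕ) (ha : 2 ≤ a) (h0 : a - 1 = e0)
    (h1 : j + a - 1 = e1) (h2 : j + a = e2) (h3 : j + a + 1 = e3) :
    phi κ q a j = q ^ e0 * (1-q)^2 * (1 - q ^ j) * (1 - q ^ (j+κ+1)) * (1 + q ^ e2) /
      ((1 - q ^ (κ+1)) * (1 - q ^ e1) * (1 - q ^ e2) * (1 - q ^ e3)) := by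
  rcases j with _ | j
  · simp [phi, show a ≠ 1 by omega]
  · rw [phi, if_neg (show j + 1 ≠ 0 by omega), h0, h1, h3, h2]

lemma T_eval (κ : ℕ) (q : ℝ) (b j r e0 e1 e2 e3 : ℕ) (hq : q ≠ 0)
    (hr : κ + 1 - b = r) (h0 : b - 1 = e0) (h1 : j + 1 + b - 1 = e1) (h2 : j + 1 + b = e2)
    (h3 : j + 1 + b + 1 = e3)
    (n1 : 1 - q ^ (j+1) ≠ 0) (n2 : 1 - q ^ (j+1+κ+1) ≠ 0)
    (n3 : 1 - q ^ (κ+1) ≠ 0) (n4 : 1 - q ^ e1 ≠ 0) (n5 : 1 - q ^ e2 ≠ 0)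
    (n6 : 1 - q ^ e3 ≠ 0) (n7 : 1 - q ^ b ≠ 0) (n8 : 1 - q ^ r ≠ 0) :
    (yy κ q b (j+1))⁻¹ * phi κ q b (j+1)
      = q ^ (j+1) * (1 - q ^ b) * (1 - q ^ r) * q ^ e0 * (1-q)^2 * (1 + q ^ e2) /
        ((1 - q ^ (κ+1)) * (1 - q ^ e1) * (1 - q ^ e2) * (1 - q ^ e3)) := by
  rw [yy, hr, phi_eval κ q b j e0 e1 e2 e3 h0 h1 h2 h3]
  have : q ^ (j+1) ≠ 0 := pow_ne_zero _ hq
  field_simp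

lemma phi_evalD (κ : ℕ) (q : ℝ) (a j e0 e1 e2 e3 : ℕ) (c D : ℝ) (h0 : a - 1 = e0)
    (h1 : j + 1 + a - 1 = e1) (h2 : j + 1 + a = e2) (h3 : j + 1 + a + 1 = e3)
    (hc : c ≠ 0) (hD : D = (1 - q ^ (κ+1)) * (1 - q ^ e1) * (1 - q ^ e2) * (1 - q ^ e3) * c) :
    phi κ q a (j+1) = q ^ e0 * (1-q)^2 * (1 - q ^ (j+1)) * (1 - q ^ (j+1+κ+1)) * (1 + q ^ e2) * c / D := by
  rw [phi_eval κ q a j e0 e1 e2 e3 h0 h1 h2 h3, hD, mul_div_mul_right _ _ hc]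

lemma phi_evalD' (κ : ℕ) (q : ℝ) (a j e0 e1 e2 e3 : ℕ) (c D : ℝ) (ha : 2 ≤ a) (h0 : a - 1 = e0)
    (h1 : j + a - 1 = e1) (h2 : j + a = e2) (h3 : j + a + 1 = e3)
    (hc : c ≠ 0) (hD : D = (1 - q ^ (κ+1)) * (1 - q ^ e1) * (1 - q ^ e2) * (1 - q ^ e3) * c) :
    phi κ q a j = q ^ e0 * (1-q)^2 * (1 - q ^ j) * (1 - q ^ (j+κ+1)) * (1 + q ^ e2) * c / D := by
  rw [phi_eval' κ q a j e0 e1 e2 e3 ha h0 h1 h2 h3, hD, mul_div_mul_right _ _ hc]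

lemma T_evalD (κ : ℕ) (q : ℝ) (b j r e0 e1 e2 e3 : ℕ) (c D : ℝ) (hq : q ≠ 0)
    (hr : κ + 1 - b = r) (h0 : b - 1 = e0) (h1 : j + 1 + b - 1 = e1) (h2 : j + 1 + b = e2)
    (h3 : j + 1 + b + 1 = e3)
    (n1 : 1 - q ^ (j+1) ≠ 0) (n2 : 1 - q ^ (j+1+κ+1) ≠ 0)
    (n3 : 1 - q ^ (κ+1) ≠ 0) (n4 : 1 - q ^ e1 ≠ 0) (n5 : 1 - q ^ e2 ≠ 0)
    (n6 : 1 - q ^ e3 ≠ 0) (n7 : 1 - q ^ b ≠ 0) (n8 : 1 - q ^ r ≠ 0)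
    (hc : c ≠ 0) (hD : D = (1 - q ^ (κ+1)) * (1 - q ^ e1) * (1 - q ^ e2) * (1 - q ^ e3) * c) :
    (yy κ q b (j+1))⁻¹ * phi κ q b (j+1)
      = q ^ (j+1) * (1 - q ^ b) * (1 - q ^ r) * q ^ e0 * (1-q)^2 * (1 + q ^ e2) * c / D := by
  rw [T_eval κ q b j r e0 e1 e2 e3 hq hr h0 h1 h2 h3 n1 n2 n3 n4 n5 n6 n7 n8, hD,
      mul_div_mul_right _ _ hc]

lemma comb {D a b c d e f : ℝ} (h : a - 2*b + c = 2*d - e - f) :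
    a/D - 2*(b/D) + c/D = 2*(d/D) - e/D - f/D := by
  rw [← mul_div_assoc, ← mul_div_assoc, div_sub_div_same, ← add_div, div_sub_div_same,
      div_sub_div_same, h]

lemma comb2 {D a b c d e : ℝ} (h : a - 2*b + c = 2*d - e) :
    a/D - 2*(b/D) + c/D = 2*(d/D) - e/D := by
  rw [← mul_div_assoc, ← mul_div_assoc, div_sub_div_same, ← add_div, div_sub_div_same, h]

lemma comb1 {D a b c d : ℝ} (h : a - 2*b + c = 2*d) :
    a/D - 2*(b/D) + c/D = 2*(d/D) := by
  rw [← mul_div_assoc, ← mul_div_assoc, div_sub_div_same, ← add_div, h]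

lemma comb_one2 {D b c d e : ℝ} (hD : D ≠ 0) (h : D - 2*b + c = 2*d - e) :
    1 - 2*(b/D) + c/D = 2*(d/D) - e/D := by
  rw [show (1:ℝ) = D/D from (div_self hD).symm]
  exact comb2 h

lemma comb_one1 {D b c d : ℝ} (hD : D ≠ 0) (h : D - 2*b + c = 2*d) :
    1 - 2*(b/D) + c/D = 2*(d/D) := by
  rw [show (1:ℝ) = D/D from (div_self hD).symm]
  exact comb1 h

lemma sum_cartan_gen (κ c : ℕ) (X : ℕ → ℝ) (hc : c + 1 ≤ κ) :
    ∑ b ∈ Finset.Icc 1 κ, cartan (c+1) b * X b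
      = 2 * X (c+1) - (if 1 ≤ c then X c else 0) - (if c + 2 ≤ κ then X (c+2) else 0) := by
  have h1 : (1:ℕ) ≤ κ := le_trans (Nat.le_add_left 1 c) hc
  simp only [cartan, sub_mul, ite_mul, zero_mul, one_mul]
  rw [Finset.sum_sub_distrib, Finset.sum_sub_distrib]
  have e1 : ∑ b ∈ Finset.Icc 1 κ, (if c + 1 = b then (2:ℝ) * X b else 0) = 2 * X (c+1) := by
    rw [Finset.sum_ite_eq]
    simp [Nat.le_add_left, hc]
  have e2 : ∑ b ∈ Finset.Icc 1 κ, (if c + 1 + 1 = b then X b else 0)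
      = if c + 2 ≤ κ then X (c+2) else 0 := by
    rw [Finset.sum_ite_eq]
    simp [Finset.mem_Icc, Nat.le_add_left]
    simp only [show c + 1 < κ ↔ c + 2 ≤ κ by omega, show c + 1 + 1 = c + 2 by omega]
  have e3 : ∑ b ∈ Finset.Icc 1 κ, (if c + 1 = b + 1 then X b else 0)
      = if 1 ≤ c then X c else 0 := by
    simp only [Nat.add_right_cancel_iff]
    rw [Finset.sum_ite_eq]
    simp [Finset.mem_Icc, le_trans (le_of_lt (Nat.lt_succ_self c)) hc]
  rw [e1, e2, e3]; ring

lemma sum_cartan_app (κ c j : ℕ) (q : ℝ) (hc : c + 1 ≤ κ) :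
    ∑ b ∈ Finset.Icc 1 κ, cartan (c+1) b * (yy κ q b (j+1))⁻¹ * phi κ q b (j+1)
      = 2 * ((yy κ q (c+1) (j+1))⁻¹ * phi κ q (c+1) (j+1))
        - (if 1 ≤ c then (yy κ q c (j+1))⁻¹ * phi κ q c (j+1) else 0)
        - (if c + 2 ≤ κ then (yy κ q (c+2) (j+1))⁻¹ * phi κ q (c+2) (j+1) else 0) := by
  have h := sum_cartan_gen κ c (fun b => (yy κ q b (j+1))⁻¹ * phi κ q b (j+1)) hc
  simpa only [mul_assoc] using h

theorem stmt3 (κ : ℕ) (hκ : 1 ≤ κ) (q : ℝ) (hq0 : 0 < q) (hq1 : q < 1)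
    (i a : ℕ) (hi : 1 ≤ i) (ha1 : 1 ≤ a) (ha2 : a ≤ κ) :
    phi κ q a (i-1) - 2 * phi κ q a i + phi κ q a (i+1)
      = ∑ b ∈ Finset.Icc 1 κ, cartan a b * (yy κ q b i)⁻¹ * phi κ q b i := by
  have K := key q hq0 hq1
  have hqn : q ≠ 0 := ne_of_gt hq0
  obtain ⟨c, rfl⟩ : ∃ c, a = c + 1 := ⟨a - 1, by omega⟩
  obtain ⟨j, rfl⟩ : ∃ j, i = j + 1 := ⟨i - 1, by omega⟩
  simp only [Nat.add_sub_cancel]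
  rw [sum_cartan_app κ c j q (by omega)]
  rcases Nat.eq_zero_or_pos c with rfl | hcpos
  · -- a = 1
    rw [if_neg (show ¬(1 ≤ 0) by omega)]
    rcases Nat.lt_or_ge κ 2 with hk | hk
    · -- κ = 1
      have hk1 : κ = 1 := by omega
      subst hk1
      rw [if_neg (show ¬(0+2 ≤ 1) by omega), sub_zero, sub_zero]
      rcases Nat.eq_zero_or_pos j with rfl | hjpos
      · -- i = 1
        set D : ℝ := (1 - q^(1+1)) * (1 - q^1) * (1 - q^2) * (1 - q^3) * (1 - q^4) with hD
        have hDne : D ≠ 0 := by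
          rw [hD]
          exact mul_ne_zero (mul_ne_zero (mul_ne_zero (mul_ne_zero (K _ (by omega)) (K _ (by omega))) (K _ (by omega))) (K _ (by omega))) (K _ (by omega))
        rw [show phi 1 q (0+1) 0 = (1:ℝ) from by simp [phi],
            T_evalD 1 q (0+1) 0 1 0 1 2 3 ((1-q^4)) D hqn (by omega) (by omega) (by omega) (by omega) (by omega) (K _ (by omega)) (K _ (by omega)) (K _ (by omega)) (K _ (by omega)) (K _ (by omega)) (K _ (by omega)) (K _ (by omega)) (K _ (by omega)) (K _ (by omega)) (by rw [hD]; try ring),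
            phi_evalD 1 q (0+1) 0 0 1 2 3 ((1-q^4)) D (by omega) (by omega) (by omega) (by omega) (K _ (by omega)) (by rw [hD]; try ring),
            phi_evalD 1 q (0+1) (0+1) 0 2 3 4 ((1-q^1)) D (by omega) (by omega) (by omega) (by omega) (K _ (by omega)) (by rw [hD]; try ring)]
        exact comb_one1 hDne (by ring)
      · obtain ⟨j', rfl⟩ : ∃ j', j = j' + 1 := ⟨j - 1, by omega⟩
        set D : ℝ := (1 - q^(1+1)) * (1 - q^(j'+1)) * (1 - q^(j'+2)) * (1 - q^(j'+3)) * (1 - q^(j'+4)) * (1 - q^(j'+5)) with hD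
        rw [T_evalD 1 q (0+1) (j'+1) 1 0 (j'+2) (j'+3) (j'+4) ((1-q^(j'+1))*(1-q^(j'+5))) D hqn (by omega) (by omega) (by omega) (by omega) (by omega) (K _ (by omega)) (K _ (by omega)) (K _ (by omega)) (K _ (by omega)) (K _ (by omega)) (K _ (by omega)) (K _ (by omega)) (K _ (by omega)) (mul_ne_zero (K _ (by omega)) (K _ (by omega))) (by rw [hD]; try ring),
            phi_evalD 1 q (0+1) j' 0 (j'+1) (j'+2) (j'+3) ((1-q^(j'+4))*(1-q^(j'+5))) D (by omega) (by omega) (by omega) (by omega) (mul_ne_zero (K _ (by omega)) (K _ (by omega))) (by rw [hD]; try ring),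
            phi_evalD 1 q (0+1) (j'+1) 0 (j'+2) (j'+3) (j'+4) ((1-q^(j'+1))*(1-q^(j'+5))) D (by omega) (by omega) (by omega) (by omega) (mul_ne_zero (K _ (by omega)) (K _ (by omega))) (by rw [hD]; try ring),
            phi_evalD 1 q (0+1) (j'+1+1) 0 (j'+3) (j'+4) (j'+5) ((1-q^(j'+1))*(1-q^(j'+2))) D (by omega) (by omega) (by omega) (by omega) (mul_ne_zero (K _ (by omega)) (K _ (by omega))) (by rw [hD]; try ring)]
        exact comb1 (by ring)
    · obtain ⟨m, rfl⟩ : ∃ m, κ = m + 2 := ⟨κ - 2, by omega⟩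
      rw [if_pos (show 0+2 ≤ m+2 by omega), sub_zero]
      rcases Nat.eq_zero_or_pos j with rfl | hjpos
      · -- i = 1
        set D : ℝ := (1 - q^(m+2+1)) * (1 - q^1) * (1 - q^2) * (1 - q^3) * (1 - q^4) with hD
        have hDne : D ≠ 0 := by
          rw [hD]
          exact mul_ne_zero (mul_ne_zero (mul_ne_zero (mul_ne_zero (K _ (by omega)) (K _ (by omega))) (K _ (by omega))) (K _ (by omega))) (K _ (by omega))
        rw [show phi (m+2) q (0+1) 0 = (1:ℝ) from by simp [phi],
            T_evalD (m+2) q (0+1) 0 (m+2) 0 1 2 3 ((1-q^4)) D hqn (by omega) (by omega) (by omega) (by omega) (by omega) (K _ (by omega)) (K _ (by omega)) (K _ (by omega)) (K _ (by omega)) (K _ (by omega)) (K _ (by omega)) (K _ (by omega)) (K _ (by omega)) (K _ (by omega)) (by rw [hD]; try ring),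
            T_evalD (m+2) q (0+2) 0 (m+1) 1 2 3 4 ((1-q^1)) D hqn (by omega) (by omega) (by omega) (by omega) (by omega) (K _ (by omega)) (K _ (by omega)) (K _ (by omega)) (K _ (by omega)) (K _ (by omega)) (K _ (by omega)) (K _ (by omega)) (K _ (by omega)) (K _ (by omega)) (by rw [hD]; try ring),
            phi_evalD (m+2) q (0+1) 0 0 1 2 3 ((1-q^4)) D (by omega) (by omega) (by omega) (by omega) (K _ (by omega)) (by rw [hD]; try ring),
            phi_evalD (m+2) q (0+1) (0+1) 0 2 3 4 ((1-q^1)) D (by omega) (by omega) (by omega) (by omega) (K _ (by omega)) (by rw [hD]; try ring)]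
        exact comb_one2 hDne (by ring)
      · obtain ⟨j', rfl⟩ : ∃ j', j = j' + 1 := ⟨j - 1, by omega⟩
        set D : ℝ := (1 - q^(m+2+1)) * (1 - q^(j'+1)) * (1 - q^(j'+2)) * (1 - q^(j'+3)) * (1 - q^(j'+4)) * (1 - q^(j'+5)) with hD
        rw [T_evalD (m+2) q (0+1) (j'+1) (m+2) 0 (j'+2) (j'+3) (j'+4) ((1-q^(j'+1))*(1-q^(j'+5))) D hqn (by omega) (by omega) (by omega) (by omega) (by omega) (K _ (by omega)) (K _ (by omega)) (K _ (by omega)) (K _ (by omega)) (K _ (by omega)) (K _ (by omega)) (K _ (by omega)) (K _ (by omega)) (mul_ne_zero (K _ (by omega)) (K _ (by omega))) (by rw [hD]; try ring),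
            T_evalD (m+2) q (0+2) (j'+1) (m+1) 1 (j'+3) (j'+4) (j'+5) ((1-q^(j'+1))*(1-q^(j'+2))) D hqn (by omega) (by omega) (by omega) (by omega) (by omega) (K _ (by omega)) (K _ (by omega)) (K _ (by omega)) (K _ (by omega)) (K _ (by omega)) (K _ (by omega)) (K _ (by omega)) (K _ (by omega)) (mul_ne_zero (K _ (by omega)) (K _ (by omega))) (by rw [hD]; try ring),
            phi_evalD (m+2) q (0+1) j' 0 (j'+1) (j'+2) (j'+3) ((1-q^(j'+4))*(1-q^(j'+5))) D (by omega) (by omega) (by omega) (by omega) (mul_ne_zero (K _ (by omega)) (K _ (by omega))) (by rw [hD]; try ring),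
            phi_evalD (m+2) q (0+1) (j'+1) 0 (j'+2) (j'+3) (j'+4) ((1-q^(j'+1))*(1-q^(j'+5))) D (by omega) (by omega) (by omega) (by omega) (mul_ne_zero (K _ (by omega)) (K _ (by omega))) (by rw [hD]; try ring),
            phi_evalD (m+2) q (0+1) (j'+1+1) 0 (j'+3) (j'+4) (j'+5) ((1-q^(j'+1))*(1-q^(j'+2))) D (by omega) (by omega) (by omega) (by omega) (mul_ne_zero (K _ (by omega)) (K _ (by omega))) (by rw [hD]; try ring)]
        exact comb2 (by ring)
  · obtain ⟨d, rfl⟩ : ∃ d, c = d + 1 := ⟨c - 1, by omega⟩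
    rw [if_pos (show 1 ≤ d+1 by omega)]
    rcases Nat.lt_or_ge κ (d+3) with hk | hk
    · -- a = κ = d+2
      have hk1 : κ = d+2 := by omega
      subst hk1
      rw [if_neg (show ¬(d+1+2 ≤ d+2) by omega), sub_zero]
      set D : ℝ := (1 - q^(d+2+1)) * (1 - q^(j+d+1)) * (1 - q^(j+d+2)) * (1 - q^(j+d+3)) * (1 - q^(j+d+4)) * (1 - q^(j+d+5)) with hD
      rw [T_evalD (d+2) q (d+1+1) j 1 (d+1) (j+d+2) (j+d+3) (j+d+4) ((1-q^(j+d+1))*(1-q^(j+d+5))) D hqn (by omega) (by omega) (by omega) (by omega) (by omega) (K _ (by omega)) (K _ (by omega)) (K _ (by omega)) (K _ (by omega)) (K _ (by omega)) (K _ (by omega)) (K _ (by omega)) (K _ (by omega)) (mul_ne_zero (K _ (by omega)) (K _ (by omega))) (by rw [hD]; try ring),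
          T_evalD (d+2) q (d+1) j 2 d (j+d+1) (j+d+2) (j+d+3) ((1-q^(j+d+4))*(1-q^(j+d+5))) D hqn (by omega) (by omega) (by omega) (by omega) (by omega) (K _ (by omega)) (K _ (by omega)) (K _ (by omega)) (K _ (by omega)) (K _ (by omega)) (K _ (by omega)) (K _ (by omega)) (K _ (by omega)) (mul_ne_zero (K _ (by omega)) (K _ (by omega))) (by rw [hD]; try ring),
          phi_evalD' (d+2) q (d+1+1) j (d+1) (j+d+1) (j+d+2) (j+d+3) ((1-q^(j+d+4))*(1-q^(j+d+5))) D (by omega) (by omega) (by omega) (by omega) (by omega) (mul_ne_zero (K _ (by omega)) (K _ (by omega))) (by rw [hD]; try ring),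
          phi_evalD (d+2) q (d+1+1) j (d+1) (j+d+2) (j+d+3) (j+d+4) ((1-q^(j+d+1))*(1-q^(j+d+5))) D (by omega) (by omega) (by omega) (by omega) (mul_ne_zero (K _ (by omega)) (K _ (by omega))) (by rw [hD]; try ring),
          phi_evalD (d+2) q (d+1+1) (j+1) (d+1) (j+d+3) (j+d+4) (j+d+5) ((1-q^(j+d+1))*(1-q^(j+d+2))) D (by omega) (by omega) (by omega) (by omega) (mul_ne_zero (K _ (by omega)) (K _ (by omega))) (by rw [hD]; try ring)]
      exact comb2 (by ring)
    · obtain ⟨m, rfl⟩ : ∃ m, κ = d+3+m := ⟨κ - (d+3), by omega⟩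
      rw [if_pos (show d+1+2 ≤ d+3+m by omega)]
      set D : ℝ := (1 - q^(d+3+m+1)) * (1 - q^(j+d+1)) * (1 - q^(j+d+2)) * (1 - q^(j+d+3)) * (1 - q^(j+d+4)) * (1 - q^(j+d+5)) with hD
      rw [T_evalD (d+3+m) q (d+1+1) j (m+2) (d+1) (j+d+2) (j+d+3) (j+d+4) ((1-q^(j+d+1))*(1-q^(j+d+5))) D hqn (by omega) (by omega) (by omega) (by omega) (by omega) (K _ (by omega)) (K _ (by omega)) (K _ (by omega)) (K _ (by omega)) (K _ (by omega)) (K _ (by omega)) (K _ (by omega)) (K _ (by omega)) (mul_ne_zero (K _ (by omega)) (K _ (by omega))) (by rw [hD]; try ring),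
          T_evalD (d+3+m) q (d+1) j (m+3) d (j+d+1) (j+d+2) (j+d+3) ((1-q^(j+d+4))*(1-q^(j+d+5))) D hqn (by omega) (by omega) (by omega) (by omega) (by omega) (K _ (by omega)) (K _ (by omega)) (K _ (by omega)) (K _ (by omega)) (K _ (by omega)) (K _ (by omega)) (K _ (by omega)) (K _ (by omega)) (mul_ne_zero (K _ (by omega)) (K _ (by omega))) (by rw [hD]; try ring),
          T_evalD (d+3+m) q (d+1+2) j (m+1) (d+2) (j+d+3) (j+d+4) (j+d+5) ((1-q^(j+d+1))*(1-q^(j+d+2))) D hqn (by omega) (by omega) (by omega) (by omega) (by omega) (K _ (by omega)) (K _ (by omega)) (K _ (by omega)) (K _ (by omega)) (K _ (by omega)) (K _ (by omega)) (K _ (by omega)) (K _ (by omega)) (mul_ne_zero (K _ (by omega)) (K _ (by omega))) (by rw [hD]; try ring),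
          phi_evalD' (d+3+m) q (d+1+1) j (d+1) (j+d+1) (j+d+2) (j+d+3) ((1-q^(j+d+4))*(1-q^(j+d+5))) D (by omega) (by omega) (by omega) (by omega) (by omega) (mul_ne_zero (K _ (by omega)) (K _ (by omega))) (by rw [hD]; try ring),
          phi_evalD (d+3+m) q (d+1+1) j (d+1) (j+d+2) (j+d+3) (j+d+4) ((1-q^(j+d+1))*(1-q^(j+d+5))) D (by omega) (by omega) (by omega) (by omega) (mul_ne_zero (K _ (by omega)) (K _ (by omega))) (by rw [hD]; try ring),
          phi_evalD (d+3+m) q (d+1+1) (j+1) (d+1) (j+d+3) (j+d+4) (j+d+5) ((1-q^(j+d+1))*(1-q^(j+d+2))) D (by omega) (by omega) (by omega) (by omega) (mul_ne_zero (K _ (by omega)) (K _ (by omega))) (by rw [hD]; try ring)]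
      exact comb (by ring)
end

section
/- For $0<q<1$, $\kappa\ge 1$, $1 \le a \le \kappa$, $i \ge 1$, with $\varphi_i^{(a)}$ as in the principal specialization formula and $(C^{-1})_{ab} = \min(a,b) - \frac{ab}{\kappa+1}$, the telescoped sum satisfies $\sum_{b=1}^\kappa (C^{-1})_{ab}(\varphi_{i-1}^{(b)} - \varphi_i^{(b)}) = \frac{q^{i+a-1}(1-q)(1-q^a)(1-q^{\kappa+1-a})}{(1-q^{\kappa+1})(1-q^{i+a-1})(1-q^{i+a})}$, where $\varphi_0^{(b)} = \delta_{b,1}$ and $\varphi_i^{(b)} = \frac{q^{b-1}(1-q)^2(1-q^i)(1-q^{i+\kappa+1})(1+q^{i+b})}{(1-q^{\kappa+1})(1-q^{i+b-1})(1-q^{i+b})(1-q^{i+b+1})}$ for $i \ge 1$. -/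
/-- Inverse Cartan matrix entries `(C⁻¹)_{ab} = min(a,b) - ab/(κ+1)`. -/
noncomputable def cartanInv (κ a b : ℕ) : ℝ :=
  (min a b : ℝ) - ((a:ℝ) * b) / ((κ:ℝ) + 1)

/-- The right-hand side of the telescoped-sum identity, as a function of `b`. -/
noncomputable def Xf (κ : ℕ) (q : ℝ) (i b : ℕ) : ℝ :=
  q ^ (i+b-1) * (1-q) * (1 - q ^ b) * (1 - q ^ (κ+1-b)) /
    ((1 - q ^ (κ+1)) * (1 - q ^ (i+b-1)) * (1 - q ^ (i+b)))

lemma one_sub_pow_ne (q : ℝ) (hq0 : 0 < q) (hq1 : q < 1) (n : ℕ) (hn : n ≠ 0) :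
    1 - q ^ n ≠ 0 := by
  have : q ^ n < 1 := pow_lt_one₀ hq0.le hq1 hn
  linarith

lemma Xf_zero (κ : ℕ) (q : ℝ) (i : ℕ) : Xf κ q i 0 = 0 := by
  simp [Xf]

lemma Xf_top (κ : ℕ) (q : ℝ) (i : ℕ) : Xf κ q i (κ+1) = 0 := by
  simp [Xf, Nat.sub_self]

lemma cartan_zero (κ a : ℕ) : cartanInv κ a 0 = 0 := by
  simp [cartanInv, min_eq_right (Nat.cast_nonneg a : (0:ℝ) ≤ a)]

lemma cartan_top (κ a : ℕ) (ha : a ≤ κ) : cartanInv κ a (κ+1) = 0 := by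
  have hκR : ((κ:ℝ) + 1) ≠ 0 := by positivity
  unfold cartanInv
  have hle : (a:ℝ) ≤ ((κ+1:ℕ):ℝ) := Nat.cast_le.mpr (by omega)
  rw [min_eq_left hle]
  push_cast
  field_simp
  ring

lemma cartan_delta (κ a j : ℕ) (ha1 : 1 ≤ a) (ha2 : a ≤ κ) :
    2 * cartanInv κ a (j+1) - cartanInv κ a (j+2) - cartanInv κ a j
      = if j+1 = a then 1 else 0 := by
  have hκR : ((κ:ℝ) + 1) ≠ 0 := by positivity
  unfold cartanInv
  rw [← Nat.cast_min, ← Nat.cast_min, ← Nat.cast_min]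
  by_cases h : j + 1 = a
  · obtain rfl : a = j + 1 := h.symm
    rw [if_pos rfl, show min (j+1) (j+1) = j+1 from by omega,
      show min (j+1) (j+2) = j+1 from by omega, show min (j+1) j = j from by omega]
    push_cast
    field_simp
    ring
  · rw [if_neg h]
    rcases lt_or_ge (j+1) a with hlt | hge
    · rw [show min a (j+1) = j+1 from by omega, show min a (j+2) = j+2 from by omega,
        show min a j = j from by omega]
      push_cast
      field_simp
      ring
    · rw [show min a (j+1) = a from by omega, show min a (j+2) = a from by omega,
        show min a j = a from by omega]
      push_cast
      field_simp
      ring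

lemma frac5 (K a b1 b2 b3 c d1 d2 d3 x y1 y2 z w1 w2 u v1 v2 : ℝ)
    (hb1 : b1 ≠ 0) (hb2 : b2 ≠ 0) (hb3 : b3 ≠ 0)
    (hd1 : d1 ≠ 0) (hd2 : d2 ≠ 0) (hd3 : d3 ≠ 0)
    (hy1 : y1 ≠ 0) (hy2 : y2 ≠ 0) (hw1 : w1 ≠ 0) (hw2 : w2 ≠ 0)
    (hv1 : v1 ≠ 0) (hv2 : v2 ≠ 0)
    (h : (a*(d1*d2*d3) - c*(b1*b2*b3)) * (y1*y2*(w1*w2)*(v1*v2))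
        = (2*x*(w1*w2*(v1*v2)) - z*(y1*y2*(v1*v2)) - u*(y1*y2*(w1*w2))) * (b1*b2*b3*(d1*d2*d3))) :
    a/(K*b1*b2*b3) - c/(K*d1*d2*d3)
      = 2*(x/(K*y1*y2)) - z/(K*w1*w2) - u/(K*v1*v2) := by
  have E : a/(b1*b2*b3) - c/(d1*d2*d3) = 2*(x/(y1*y2)) - z/(w1*w2) - u/(v1*v2) := by
    field_simp
    linear_combination h
  have hsplit : a/(K*b1*b2*b3) - c/(K*d1*d2*d3)
      = (a/(b1*b2*b3) - c/(d1*d2*d3))/K := by ring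
  rw [hsplit, E]; ring

lemma key_s5 (κ : ℕ) (q : ℝ) (hq0 : 0 < q) (hq1 : q < 1) (b i : ℕ)
    (hb1 : 1 ≤ b) (hb2 : b ≤ κ) (hi : 1 ≤ i) :
    phi κ q b (i-1) - phi κ q b i
      = 2 * Xf κ q i b - Xf κ q i (b-1) - Xf κ q i (b+1) := by
  obtain ⟨c, rfl⟩ : ∃ c, b = c + 1 := ⟨b-1, by omega⟩
  obtain ⟨s, rfl⟩ : ∃ s, κ = c + 1 + s := ⟨κ - (c+1), by omega⟩
  obtain ⟨m, rfl⟩ : ∃ m, i = m + 1 := ⟨i-1, by omega⟩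
  have hne := one_sub_pow_ne q hq0 hq1
  have hq : (1:ℝ) - q ≠ 0 := ne_of_gt (by linarith)
  rcases m with _ | m
  · rcases c with _ | c
    · rw [Xf_zero]
      simp only [phi, Xf]
      norm_num
      simp only [show 1+s+1-2 = s from by omega]
      have h1 : (1:ℝ) - q ^ (1+s+1) ≠ 0 := hne _ (by omega)
      have h2 : (1:ℝ) - q ^ 2 ≠ 0 := hne _ (by omega)
      have h3 : (1:ℝ) - q ^ 3 ≠ 0 := hne _ (by omega)
      field_simp
      ring
    · simp only [phi, Xf]
      norm_num
      simp only [show c+1+1+s+1-(c+1+1) = s+1 from by omega,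
        show c+1+1+s+1-(c+1) = s+2 from by omega,
        show c+1+1+s+1-(c+1+1+1) = s from by omega]
      have h1 : (1:ℝ) - q ^ (c+1+1+s+1) ≠ 0 := hne _ (by omega)
      have h2 : (1:ℝ) - q ^ (c+1+1) ≠ 0 := hne _ (by omega)
      have h3 : (1:ℝ) - q ^ (1+(c+1+1)) ≠ 0 := hne _ (by omega)
      have h4 : (1:ℝ) - q ^ (1+(c+1+1)+1) ≠ 0 := hne _ (by omega)
      have h5 : (1:ℝ) - q ^ (c+1) ≠ 0 := hne _ (by omega)
      have h6 : (1:ℝ) - q ^ (1+(c+1)) ≠ 0 := hne _ (by omega)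
      have h7 : (1:ℝ) - q ^ (c+1+1+1) ≠ 0 := hne _ (by omega)
      have h8 : (1:ℝ) - q ^ (1+(c+1+1+1)) ≠ 0 := hne _ (by omega)
      field_simp
      ring
  · simp only [phi, Xf]
    norm_num
    simp only [show c+1+s+1-(c+1) = s+1 from by omega,
      show c+1+s+1-c = s+2 from by omega,
      show c+1+s+1-(c+1+1) = s from by omega]
    apply frac5 <;> first
      | exact hne _ (by omega)
      | ring

theorem stmt5 (κ : ℕ) (hκ : 1 ≤ κ) (q : ℝ) (hq0 : 0 < q) (hq1 : q < 1)
    (a i : ℕ) (ha1 : 1 ≤ a) (ha2 : a ≤ κ) (hi : 1 ≤ i) :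
    ∑ b ∈ Finset.Icc 1 κ, cartanInv κ a b * (phi κ q b (i-1) - phi κ q b i)
      = q ^ (i+a-1) * (1-q) * (1 - q ^ a) * (1 - q ^ (κ+1-a)) /
        ((1 - q ^ (κ+1)) * (1 - q ^ (i+a-1)) * (1 - q ^ (i+a))) := by
  show _ = Xf κ q i a
  have hstep1 : ∑ b ∈ Finset.Icc 1 κ, cartanInv κ a b * (phi κ q b (i-1) - phi κ q b i)
      = ∑ j ∈ Finset.range κ, cartanInv κ a (j+1) * (phi κ q (j+1) (i-1) - phi κ q (j+1) i) := by
    rw [← Finset.Ico_add_one_right_eq_Icc, Finset.sum_Ico_eq_sum_range]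
    exact Finset.sum_congr rfl fun j _ => by rw [add_comm]
  rw [hstep1]
  have hstep2 : ∀ j ∈ Finset.range κ,
      cartanInv κ a (j+1) * (phi κ q (j+1) (i-1) - phi κ q (j+1) i)
        = 2*(cartanInv κ a (j+1) * Xf κ q i (j+1)) - cartanInv κ a (j+1) * Xf κ q i j
            - cartanInv κ a (j+1) * Xf κ q i (j+2) := by
    intro j hj
    rw [key_s5 κ q hq0 hq1 (j+1) i (by omega) (by have := Finset.mem_range.mp hj; omega) hi]
    simp only [Nat.add_sub_cancel]
    ring
  rw [Finset.sum_congr rfl hstep2, Finset.sum_sub_distrib, Finset.sum_sub_distrib,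
    ← Finset.mul_sum]
  have hA : ∑ j ∈ Finset.range κ, cartanInv κ a (j+2) * Xf κ q i (j+1)
      = ∑ j ∈ Finset.range κ, cartanInv κ a (j+1) * Xf κ q i j := by
    have e1 : ∑ j ∈ Finset.range (κ+1), cartanInv κ a (j+1) * Xf κ q i j
        = (∑ j ∈ Finset.range κ, cartanInv κ a (j+2) * Xf κ q i (j+1))
            + cartanInv κ a 1 * Xf κ q i 0 :=
      Finset.sum_range_succ' (fun j => cartanInv κ a (j+1) * Xf κ q i j) κ
    rw [Finset.sum_range_succ] at e1
    rw [Xf_zero, cartan_top κ a ha2] at e1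
    linarith
  have hB : ∑ j ∈ Finset.range κ, cartanInv κ a (j+1) * Xf κ q i (j+2)
      = ∑ j ∈ Finset.range κ, cartanInv κ a j * Xf κ q i (j+1) := by
    have e1 : ∑ j ∈ Finset.range (κ+1), cartanInv κ a j * Xf κ q i (j+1)
        = (∑ j ∈ Finset.range κ, cartanInv κ a (j+1) * Xf κ q i (j+2))
            + cartanInv κ a 0 * Xf κ q i 1 :=
      Finset.sum_range_succ' (fun j => cartanInv κ a j * Xf κ q i (j+1)) κ
    rw [Finset.sum_range_succ] at e1
    rw [Xf_top, cartan_zero] at e1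
    linarith
  rw [← hA, hB]
  have hcomb : 2 * ∑ j ∈ Finset.range κ, cartanInv κ a (j+1) * Xf κ q i (j+1)
        - ∑ j ∈ Finset.range κ, cartanInv κ a (j+2) * Xf κ q i (j+1)
        - ∑ j ∈ Finset.range κ, cartanInv κ a j * Xf κ q i (j+1)
      = ∑ j ∈ Finset.range κ,
          (2 * cartanInv κ a (j+1) - cartanInv κ a (j+2) - cartanInv κ a j) * Xf κ q i (j+1) := by
    rw [Finset.mul_sum, ← Finset.sum_sub_distrib, ← Finset.sum_sub_distrib]
    exact Finset.sum_congr rfl fun j _ => by ring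
  rw [hcomb]
  have hdel : ∀ j ∈ Finset.range κ,
      (2 * cartanInv κ a (j+1) - cartanInv κ a (j+2) - cartanInv κ a j) * Xf κ q i (j+1)
        = if j + 1 = a then Xf κ q i (j+1) else 0 := by
    intro j _
    rw [cartan_delta κ a j ha1 ha2]
    split_ifs <;> simp
  rw [Finset.sum_congr rfl hdel]
  rw [Finset.sum_eq_single_of_mem (a-1) (Finset.mem_range.mpr (by omega))
    (fun j _ hj => if_neg (by omega))]
  rw [if_pos (by omega), show a-1+1 = a from by omega]
end

section
/- Let $Q_i^{(a)}$ ($1\le a\le\kappa$, $i\ge 0$, with $Q_0^{(a)}=1$, $Q_{-1}^{(a)}=0$, $Q_i^{(0)}=Q_i^{(\kappa+1)}=1$) be positive reals satisfying the Q-system $(Q_i^{(a)})^2 = Q_{i-1}^{(a)} Q_{i+1}^{(a)} + Q_i^{(a-1)} Q_i^{(a+1)}$ for all $i\ge 0$ and $1\le a\le\kappa$. Define $y_i^{(a)} = \frac{Q_{i-1}^{(a)} Q_{i+1}^{(a)}}{Q_i^{(a-1)} Q_i^{(a+1)}}$. Then for all $i \ge 1$ and $1 \le a \le \kappa$: $1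 + y_i^{(a)} = \prod_{b=1}^{\kappa} (Q_i^{(b)})^{C_{ab}}$ and $1 + (y_i^{(a)})^{-1} = \frac{(Q_i^{(a)})^2}{Q_{i-1}^{(a)} Q_{i+1}^{(a)}}$, and consequently the Y-system holds: $\frac{(1+y_i^{(a)})^2}{(1+y_{i-1}^{(a)})(1+y_{i+1}^{(a)})} = \prod_{b=1}^{\kappa} (1+(y_i^{(b)})^{-1})^{C_{ab}}$ for $i \ge 2$ (where all involved $y$'s are positive). -/
/-- Cartan matrix of `sl_{κ+1}`, integer valued (used as a `zpow` exponent). -/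
def cartanZ (a b : ℕ) : ℤ :=
  (if a = b then 2 else 0) - (if a + 1 = b then 1 else 0) - (if a = b + 1 then 1 else 0)

lemma prod_cartan (κ : ℕ) (f : ℕ → ℝ) (hf : ∀ b, 1 ≤ b → b ≤ κ → f b ≠ 0)
    (h0 : f 0 = 1) (hk : f (κ+1) = 1) (a : ℕ) (ha1 : 1 ≤ a) (ha2 : a ≤ κ) :
    ∏ b ∈ Finset.Icc 1 κ, f b ^ cartanZ a b = (f a)^2 / (f (a-1) * f (a+1)) := by
  have step : ∀ b ∈ Finset.Icc 1 κ, f b ^ cartanZ a b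
      = (if a = b then f b ^ 2 else 1) /
        ((if a + 1 = b then f b else 1) * (if a - 1 = b then f b else 1)) := by
    intro b hb
    simp only [Finset.mem_Icc] at hb
    have hfb := hf b hb.1 hb.2
    have h3 : (a = b + 1) ↔ (a - 1 = b) := by omega
    simp only [cartanZ, h3]
    split_ifs <;> first | omega | (norm_num [zpow_two]; try ring)
  rw [Finset.prod_congr rfl step, Finset.prod_div_distrib, Finset.prod_mul_distrib,
    Finset.prod_ite_eq, Finset.prod_ite_eq, Finset.prod_ite_eq]
  simp only [Finset.mem_Icc]
  have e0 : (if 1 ≤ a ∧ a ≤ κ then f a ^ 2 else 1) = f a ^ 2 := by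
    rw [if_pos ⟨ha1, ha2⟩]
  have e1 : (if 1 ≤ a + 1 ∧ a + 1 ≤ κ then f (a+1) else 1) = f (a+1) := by
    split_ifs with h
    · rfl
    · have : a + 1 = κ + 1 := by omega
      rw [this, hk]
  have e2 : (if 1 ≤ a - 1 ∧ a - 1 ≤ κ then f (a-1) else 1) = f (a-1) := by
    split_ifs with h
    · rfl
    · have : a - 1 = 0 := by omega
      rw [this, h0]
  rw [e0, e1, e2]; ring

theorem stmt8 (κ : ℕ) (hκ : 1 ≤ κ) (Q : ℕ → ℤ → ℝ)
    (hpos : ∀ a : ℕ, a ≤ κ + 1 → ∀ i : ℤ, 0 ≤ i → 0 < Q a i)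
    (h0 : ∀ a : ℕ, Q a 0 = 1) (hm1 : ∀ a : ℕ, Q a (-1) = 0)
    (hbdy0 : ∀ i : ℤ, 0 ≤ i → Q 0 i = 1)
    (hbdyk : ∀ i : ℤ, 0 ≤ i → Q (κ+1) i = 1)
    (hQsys : ∀ i : ℤ, 0 ≤ i → ∀ a : ℕ, 1 ≤ a → a ≤ κ →
      (Q a i)^2 = Q a (i-1) * Q a (i+1) + Q (a-1) i * Q (a+1) i)
    (y : ℕ → ℤ → ℝ)
    (hy : ∀ a : ℕ, ∀ i : ℤ, y a i = Q a (i-1) * Q a (i+1) / (Q (a-1) i * Q (a+1) i)) :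
    (∀ i : ℤ, 1 ≤ i → ∀ a : ℕ, 1 ≤ a → a ≤ κ →
      (1 + y a i = ∏ b ∈ Finset.Icc 1 κ, (Q b i) ^ (cartanZ a b)
        ∧ 1 + (y a i)⁻¹ = (Q a i)^2 / (Q a (i-1) * Q a (i+1))))
    ∧ (∀ i : ℤ, 2 ≤ i → ∀ a : ℕ, 1 ≤ a → a ≤ κ →
      (1 + y a i)^2 / ((1 + y a (i-1)) * (1 + y a (i+1)))
        = ∏ b ∈ Finset.Icc 1 κ, (1 + (y b i)⁻¹) ^ (cartanZ a b)) := by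
  have key1 : ∀ i : ℤ, 1 ≤ i → ∀ a : ℕ, 1 ≤ a → a ≤ κ →
      1 + y a i = (Q a i)^2 / (Q (a-1) i * Q (a+1) i) := by
    intro i hi a ha1 ha2
    have hd1 : 0 < Q (a-1) i := hpos (a-1) (by omega) i (by omega)
    have hd2 : 0 < Q (a+1) i := hpos (a+1) (by omega) i (by omega)
    rw [hy, hQsys i (by omega) a ha1 ha2]
    field_simp
    ring
  have key2 : ∀ i : ℤ, 1 ≤ i → ∀ a : ℕ, 1 ≤ a → a ≤ κ →
      1 + (y a i)⁻¹ = (Q a i)^2 / (Q a (i-1) * Q a (i+1)) := by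
    intro i hi a ha1 ha2
    have hn1 : 0 < Q a (i-1) := hpos a (by omega) (i-1) (by omega)
    have hn2 : 0 < Q a (i+1) := hpos a (by omega) (i+1) (by omega)
    have hd1 : 0 < Q (a-1) i := hpos (a-1) (by omega) i (by omega)
    have hd2 : 0 < Q (a+1) i := hpos (a+1) (by omega) i (by omega)
    rw [hy, hQsys i (by omega) a ha1 ha2]
    field_simp
    try ring
  constructor
  · intro i hi a ha1 ha2
    refine ⟨?_, key2 i hi a ha1 ha2⟩
    rw [key1 i hi a ha1 ha2]
    exact (prod_cartan κ (fun b => Q b i)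
      (fun b hb1 hb2 => (hpos b (by omega) i (by omega)).ne')
      (hbdy0 i (by omega)) (hbdyk i (by omega)) a ha1 ha2).symm
  · intro i hi a ha1 ha2
    have hR : ∏ b ∈ Finset.Icc 1 κ, (1 + (y b i)⁻¹) ^ (cartanZ a b)
        = ∏ b ∈ Finset.Icc 1 κ, ((Q b i)^2 / (Q b (i-1) * Q b (i+1))) ^ (cartanZ a b) := by
      refine Finset.prod_congr rfl (fun b hb => ?_)
      simp only [Finset.mem_Icc] at hb
      rw [key2 i (by omega) b hb.1 hb.2]
    have hfne : ∀ b, 1 ≤ b → b ≤ κ → (Q b i)^2 / (Q b (i-1) * Q b (i+1)) ≠ 0 := by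
      intro b hb1 hb2
      have p1 : 0 < Q b i := hpos b (by omega) i (by omega)
      have p2 : 0 < Q b (i-1) := hpos b (by omega) (i-1) (by omega)
      have p3 : 0 < Q b (i+1) := hpos b (by omega) (i+1) (by omega)
      positivity
    have hf0 : (Q 0 i)^2 / (Q 0 (i-1) * Q 0 (i+1)) = 1 := by
      rw [hbdy0 i (by omega), hbdy0 (i-1) (by omega), hbdy0 (i+1) (by omega)]
      norm_num
    have hfk : (Q (κ+1) i)^2 / (Q (κ+1) (i-1) * Q (κ+1) (i+1)) = 1 := by
      rw [hbdyk i (by omega), hbdyk (i-1) (by omega), hbdyk (i+1) (by omega)]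
      norm_num
    rw [hR, prod_cartan κ (fun b => (Q b i)^2 / (Q b (i-1) * Q b (i+1))) hfne hf0 hfk a ha1 ha2]
    rw [key1 i (by omega) a ha1 ha2, key1 (i-1) (by omega) a ha1 ha2,
      key1 (i+1) (by omega) a ha1 ha2]
    have p : ∀ c : ℕ, c ≤ κ + 1 → ∀ j : ℤ, 0 ≤ j → 0 < Q c j := hpos
    have q1 := p (a-1) (by omega) (i-1) (by omega)
    have q2 := p (a-1) (by omega) i (by omega)
    have q3 := p (a-1) (by omega) (i+1) (by omega)
    have q4 := p a (by omega) (i-1) (by omega)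
    have q5 := p a (by omega) i (by omega)
    have q6 := p a (by omega) (i+1) (by omega)
    have q7 := p (a+1) (by omega) (i-1) (by omega)
    have q8 := p (a+1) (by omega) i (by omega)
    have q9 := p (a+1) (by omega) (i+1) (by omega)
    field_simp
end

section
/- Let $0<q<1$, $\kappa\ge 1$, $1\le a\le\kappa$. Define $\xi_i^{(a)} = \frac{q^{i+a-1}(1-q)^2(1-q^a)(1-q^{\kappa+1-a})(1+q^{i+a})}{(1-q^{\kappa+1})(1-q^{i+a-1})(1-q^{i+a})(1-q^{i+a+1})}$ for $i \ge 1$. Then for every integer $\lambda \ge 1$, the tail sum satisfies $\sum_{i \ge \lambda} \xi_i^{(a)} = \frac{q^{\lambda+a-1}(1-q)(1-q^a)(1-q^{\kappa+1-a})}{(1-q^{\kappa+1})(1-q^{\lambda+a-1})(1-q^{\lambda+a})}$. -/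
open Filter Topology

/-- The scaled column multiplicity `ξ_i^{(a)}` under principal specialization. -/
noncomputable def xi (κ : ℕ) (q : ℝ) (a i : ℕ) : ℝ :=
  q ^ (i+a-1) * (1-q)^2 * (1 - q ^ a) * (1 - q ^ (κ+1-a)) * (1 + q ^ (i+a)) /
    ((1 - q ^ (κ+1)) * (1 - q ^ (i+a-1)) * (1 - q ^ (i+a)) * (1 - q ^ (i+a+1)))

theorem stmt9 (κ : ℕ) (hκ : 1 ≤ κ) (q : ℝ) (hq0 : 0 < q) (hq1 : q < 1)
    (a : ℕ) (ha1 : 1 ≤ a) (ha2 : a ≤ κ) (lam : ℕ) (hlam : 1 ≤ lam) :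
    ∑' k : ℕ, xi κ q a (lam + k)
      = q ^ (lam+a-1) * (1-q) * (1 - q ^ a) * (1 - q ^ (κ+1-a)) /
        ((1 - q ^ (κ+1)) * (1 - q ^ (lam+a-1)) * (1 - q ^ (lam+a))) := by
  have hlt : ∀ m : ℕ, 1 ≤ m → q ^ m < 1 := fun m hm =>
    pow_lt_one₀ hq0.le hq1 (by omega)
  have hpos : ∀ m : ℕ, 1 ≤ m → 0 < 1 - q ^ m := fun m hm => sub_pos.mpr (hlt m hm)
  have hne : ∀ m : ℕ, 1 ≤ m → (1 : ℝ) - q ^ m ≠ 0 := fun m hm => (hpos m hm).ne'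
  set c := lam + a - 1 with hc
  have hc1 : 1 ≤ c := by omega
  -- telescoping function
  set f : ℕ → ℝ := fun n =>
    q ^ n * (1-q) * (1 - q ^ a) * (1 - q ^ (κ+1-a)) /
      ((1 - q ^ (κ+1)) * (1 - q ^ n) * (1 - q ^ (n+1))) with hf
  have key : ∀ k : ℕ, xi κ q a (lam + k) = f (c + k) - f (c + k + 1) := by
    intro k
    have e1 : lam + k + a - 1 = c + k := by omega
    have e2 : lam + k + a = c + k + 1 := by omega
    have e3 : lam + k + a + 1 = c + k + 2 := by omega
    simp only [xi, hf, e2, e3, e1, Nat.add_sub_cancel]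
    have hx : q ^ (c+k+1) = q ^ (c+k) * q := by ring
    have hy : q ^ (c+k+2) = q ^ (c+k) * q * q := by ring
    rw [hx, hy]
    have h1 := hne (c+k) (by omega)
    have h2 := hne (c+k+1) (by omega)
    have h3 := hne (c+k+2) (by omega)
    have h4 := hne (κ+1) (by omega)
    rw [hx] at h2; rw [hy] at h3
    generalize q ^ (c+k) = x at h1 h2 h3 ⊢
    generalize q ^ a = A
    generalize q ^ (κ+1-a) = B
    generalize q ^ (κ+1) = K at h4 ⊢
    have hxq : (1:ℝ) - x*q ≠ 0 := by simpa [mul_comm] using h2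
    have d1 : ((1:ℝ)-K)*(1-x)*(1-x*q) ≠ 0 := mul_ne_zero (mul_ne_zero h4 h1) hxq
    have d2 : ((1:ℝ)-K)*(1-x*q)*(1-x*q*q) ≠ 0 := mul_ne_zero (mul_ne_zero h4 hxq) h3
    have d0 : ((1:ℝ)-K)*(1-x)*(1-x*q)*(1-x*q*q) ≠ 0 := mul_ne_zero d1 h3
    rw [div_sub_div _ _ d1 d2, div_eq_div_iff d0 (mul_ne_zero d1 d2)]
    ring
  have hq : Tendsto (fun n : ℕ => q ^ n) atTop (𝓝 0) :=
    tendsto_pow_atTop_nhds_zero_of_lt_one hq0.le hq1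
  have h1 : Tendsto (fun n : ℕ => q ^ (c + n)) atTop (𝓝 0) := by
    simpa [pow_add] using hq.const_mul (q ^ c)
  have h1' : Tendsto (fun n : ℕ => q ^ (c + n + 1)) atTop (𝓝 0) := by
    have := hq.const_mul (q ^ (c+1))
    simp only [mul_zero] at this ⊢
    refine this.congr fun n => ?_
    ring
  have hF0 : Tendsto (fun n : ℕ => f (c + n)) atTop (𝓝 0) := by
    have hnum : Tendsto
        (fun n : ℕ => q ^ (c+n) * (1-q) * (1 - q ^ a) * (1 - q ^ (κ+1-a))) atTop
        (𝓝 (0 * (1-q) * (1 - q ^ a) * (1 - q ^ (κ+1-a)))) :=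
      ((h1.mul_const _).mul_const _).mul_const _
    have hden : Tendsto
        (fun n : ℕ => (1 - q ^ (κ+1)) * (1 - q ^ (c+n)) * (1 - q ^ (c+n+1))) atTop
        (𝓝 ((1 - q ^ (κ+1)) * (1 - 0) * (1 - 0))) :=
      ((tendsto_const_nhds.mul (tendsto_const_nhds.sub h1)).mul
        (tendsto_const_nhds.sub h1'))
    have hdne : (1 - q ^ (κ+1)) * (1 - (0:ℝ)) * (1 - 0) ≠ 0 := by
      simpa using hne (κ+1) (by omega)
    have hdiv := hnum.div hden hdne
    simp only [Pi.div_def] at hdiv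
    simpa [hf] using hdiv
  have hnonneg : ∀ k : ℕ, 0 ≤ xi κ q a (lam + k) := by
    intro k
    unfold xi
    apply div_nonneg
    · have h1 : q ^ (lam+k+a) ≤ 1 := (hlt _ (by omega)).le
      have h2 : q ^ a ≤ 1 := (hlt _ ha1).le
      have h3 : q ^ (κ+1-a) ≤ 1 := (hlt _ (by omega)).le
      have h4 : (0:ℝ) ≤ q ^ (lam+k+a-1) := by positivity
      have h5 : (0:ℝ) ≤ 1 + q ^ (lam+k+a) := by positivity
      have h6 : (0:ℝ) ≤ (1-q)^2 := sq_nonneg _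
      have := mul_nonneg (mul_nonneg (mul_nonneg (mul_nonneg h4 h6)
        (sub_nonneg.mpr h2)) (sub_nonneg.mpr h3)) h5
      linarith
    · have := hpos (κ+1) (by omega)
      have := hpos (lam+k+a-1) (by omega)
      have := hpos (lam+k+a) (by omega)
      have := hpos (lam+k+a+1) (by omega)
      positivity
  have hsum : HasSum (fun k : ℕ => xi κ q a (lam + k)) (f c) := by
    rw [hasSum_iff_tendsto_nat_of_nonneg hnonneg]
    have heq : ∀ n : ℕ, ∑ i ∈ Finset.range n, xi κ q a (lam + i) = f c - f (c + n) := by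
      intro n
      calc ∑ i ∈ Finset.range n, xi κ q a (lam + i)
          = ∑ i ∈ Finset.range n, ((fun j => f (c + j)) i - (fun j => f (c + j)) (i+1)) := by
            refine Finset.sum_congr rfl fun i _ => ?_
            simpa [add_assoc] using key i
        _ = f (c + 0) - f (c + n) := Finset.sum_range_sub' _ n
        _ = f c - f (c + n) := by norm_num
    simp only [heq]
    simpa using tendsto_const_nhds.sub hF0
  rw [hsum.tsum_eq]
  simp only [hf]
  rw [show c + 1 = lam + a by omega]
end

section
/- Let $G(\mathbf{m})$ denote the number of lattice paths from the origin to $\mathbf{m} = (m_1,\dots,m_r) \in \mathbb{N}_0^r$ with unit steps in the coordinate directions that stay within the Weyl chamber $W_r = \{(x_1,\dots,x_r) \in \mathbb{N}_0^r : x_1 \ge x_2 \ge \cdots \ge x_r\}$. Then for $\mathbf{m} \in W_r$, $G(\mathbf{m}) = (m_1+\cdots+m_r)!\, \frac{\prod_{1 \le i < j \le r}(m_i - m_j + j - i)}{(m_1+r-1)!\,(m_2+r-2)! \cdots m_r!}$. -/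
/-- Number of steps among the first `k` steps of `s` that go in direction `i`;
the `i`-th coordinate of the lattice path after `k` steps. -/
def steps {N r : ℕ} (s : Fin N → Fin r) (k : ℕ) (i : Fin r) : ℕ :=
  (Finset.univ.filter (fun j : Fin N => (j:ℕ) < k ∧ s j = i)).card

open Finset Matrix Polynomial

variable {r : ℕ}

/-- Sum of dets with one row replaced by a finite linear combination. -/
lemma det_updateRow_finset_sum {ι : Type*} (M : Matrix (Fin r) (Fin r) ℚ) (i : Fin r)
    (s : Finset ι) (c : ι → ℚ) (v : ι → Fin r → ℚ) :
    (M.updateRow i (∑ k ∈ s, c k • v k)).det = ∑ k ∈ s, c k * (M.updateRow i (v k)).det := by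
  classical
  induction s using Finset.induction_on with
  | empty =>
      simp only [Finset.sum_empty]
      have : (0 : Fin r → ℚ) = (0:ℚ) • (0 : Fin r → ℚ) := by simp
      rw [this, Matrix.det_updateRow_smul]; simp
  | insert _ _ hk ih =>
      rw [Finset.sum_insert hk, Matrix.det_updateRow_add, Matrix.det_updateRow_smul,
        Finset.sum_insert hk, ih]

lemma det_updateCol_finset_sum {ι : Type*} (M : Matrix (Fin r) (Fin r) ℚ) (l : Fin r)
    (s : Finset ι) (c : ι → ℚ) (v : ι → Fin r → ℚ) :
    (M.updateCol l (∑ k ∈ s, c k • v k)).det = ∑ k ∈ s, c k * (M.updateCol l (v k)).det := by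
  rw [← Matrix.det_transpose, ← Matrix.updateRow_transpose,
    det_updateRow_finset_sum Mᵀ l s c v]
  simp [Matrix.updateRow_transpose, Matrix.det_transpose]

lemma sum_single_eq_self (u : Fin r → ℚ) : ∑ l, u l • (Pi.single l (1:ℚ) : Fin r → ℚ) = u := by
  funext j
  simp [Finset.sum_apply, Pi.single_apply]

/-- Row/column exchange for sums of determinants with one line replaced. -/
lemma sum_mul_det_updateRow (M : Matrix (Fin r) (Fin r) ℚ) (x u : Fin r → ℚ) :
    ∑ i, x i * (M.updateRow i u).det = ∑ l, u l * (M.updateCol l x).det := by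
  have hrow : ∀ i, (M.updateRow i u).det = ∑ l, u l * (M.adjugate l i) := by
    intro i
    conv_lhs => rw [← sum_single_eq_self u, det_updateRow_finset_sum]
    exact Finset.sum_congr rfl fun l _ => by rw [Matrix.adjugate_apply]
  have hcol : ∀ l, (M.updateCol l x).det = ∑ i, x i * (M.adjugate l i) := by
    intro l
    conv_lhs => rw [← sum_single_eq_self x, det_updateCol_finset_sum]
    refine Finset.sum_congr rfl fun i _ => ?_
    congr 1
    rw [← Matrix.det_transpose, ← Matrix.updateRow_transpose, ← Matrix.adjugate_apply,
      ← Matrix.adjugate_transpose, Matrix.transpose_apply, Matrix.adjugate_apply]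
  simp_rw [hrow, hcol, Finset.mul_sum]
  rw [Finset.sum_comm]
  exact Finset.sum_congr rfl fun l _ => Finset.sum_congr rfl fun i _ => by ring

lemma sum_det_updateCol_mul (M B : Matrix (Fin r) (Fin r) ℚ) :
    ∑ l, (M.updateCol l (fun i => (M * B) i l)).det = Matrix.trace B * M.det := by
  have h : ∀ l : Fin r, (M.updateCol l (fun i => (M * B) i l)).det = B l l * M.det := by
    intro l
    have : (fun i => (M * B) i l) = fun i => ∑ k, (fun k => B k l) k • M i k := by
      funext i; simp [Matrix.mul_apply, mul_comm]
    rw [this, Matrix.det_updateCol_sum M l (fun k => B k l)]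
    simp
  simp_rw [h, ← Finset.sum_mul, Matrix.trace]
  rfl

lemma schur_col (hr : 0 < r) (a : Fin r → ℚ) (hdet : (Matrix.vandermonde a).det ≠ 0) :
    ((Matrix.vandermonde a).updateCol ⟨r-1, by omega⟩ (fun i => a i ^ r)).det
      = (∑ i, a i) * (Matrix.vandermonde a).det := by
  classical
  set V := Matrix.vandermonde a with hV
  have hunit : IsUnit V.det := isUnit_iff_ne_zero.2 hdet
  set B := V⁻¹ * (Matrix.diagonal a * V) with hB
  have hVB : V * B = Matrix.diagonal a * V := Matrix.mul_nonsing_inv_cancel_left V _ hunit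
  have htr : Matrix.trace B = ∑ i, a i := by
    rw [hB, Matrix.trace_mul_comm, Matrix.mul_assoc, Matrix.mul_nonsing_inv V hunit,
      Matrix.mul_one, Matrix.trace_diagonal]
  have hsum := sum_det_updateCol_mul V B
  rw [htr] at hsum
  have hentry : ∀ i l, (V * B) i l = a i * a i ^ (l : ℕ) := by
    intro i l; rw [hVB]; simp [Matrix.diagonal_mul, hV, Matrix.vandermonde]
  rw [Finset.sum_eq_single (⟨r-1, by omega⟩ : Fin r)] at hsum
  · have hfun : (fun i => (V * B) i ⟨r-1, by omega⟩) = fun i => a i ^ r := by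
      funext i
      rw [hentry]
      have h1 : a i * a i ^ ((⟨r-1, by omega⟩ : Fin r) : ℕ) = a i ^ (r - 1 + 1) :=
        (pow_succ' _ _).symm
      rw [h1]
      congr 1
      omega
    rw [hfun] at hsum
    exact hsum
  · intro l _ hl
    have hlt : (l : ℕ) + 1 < r := by
      have := l.isLt
      rcases Nat.lt_or_ge ((l:ℕ)+1) r with h | h
      · exact h
      · exact absurd (Fin.ext (show (l:ℕ) = r - 1 by omega)) hl
    apply Matrix.det_zero_of_column_eq (i := (⟨(l:ℕ)+1, hlt⟩ : Fin r)) (j := l)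
    · exact fun h => by simpa using congrArg Fin.val h
    · intro k
      rw [Matrix.updateCol_apply, Matrix.updateCol_apply]
      simp only [if_neg (show (⟨(l:ℕ)+1, hlt⟩ : Fin r) ≠ l from fun h => by
        simpa using congrArg Fin.val h), if_pos rfl, hentry]
      simp [hV, Matrix.vandermonde, pow_succ, mul_comm]
  · simp

lemma monic_XXn (n : ℕ) : (Polynomial.X * (Polynomial.X - 1) ^ n : ℚ[X]).Monic := by
  have h1 : (Polynomial.X - 1 : ℚ[X]).Monic := by
    simpa using Polynomial.monic_X_sub_C (1:ℚ)
  exact Polynomial.monic_X.mul (h1.pow n)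

lemma natDegree_XXn (n : ℕ) :
    (Polynomial.X * (Polynomial.X - 1) ^ n : ℚ[X]).natDegree = n + 1 := by
  have h1 : (Polynomial.X - 1 : ℚ[X]).Monic := by
    simpa using Polynomial.monic_X_sub_C (1:ℚ)
  rw [Polynomial.monic_X.natDegree_mul (h1.pow n), Polynomial.natDegree_X,
    h1.natDegree_pow]
  have : (Polynomial.X - 1 : ℚ[X]).natDegree = 1 := by
    simpa using Polynomial.natDegree_X_sub_C (1:ℚ)
  rw [this]
  ring

lemma coeff_XXn_self (n : ℕ) :
    (Polynomial.X * (Polynomial.X - 1) ^ n : ℚ[X]).coeff n = -(n : ℚ) := by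
  induction n with
  | zero => simp
  | succ n ih =>
      have hexp : (Polynomial.X * (Polynomial.X - 1) ^ (n+1) : ℚ[X])
          = (Polynomial.X * (Polynomial.X - 1) ^ n) * Polynomial.X
            - Polynomial.X * (Polynomial.X - 1) ^ n := by
        ring
      rw [hexp, Polynomial.coeff_sub, Polynomial.coeff_mul_X, ih]
      have hlead : (Polynomial.X * (Polynomial.X - 1) ^ n : ℚ[X]).coeff (n+1) = 1 := by
        have := (monic_XXn n).coeff_natDegree
        rwa [natDegree_XXn n] at this
      rw [hlead]
      push_cast
      ring

lemma detKey (hr : 0 < r) (a : Fin r → ℚ) (hdet : (Matrix.vandermonde a).det ≠ 0) :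
    ∑ i, a i * (Matrix.vandermonde (fun k => a k - if k = i then 1 else 0)).det
      = ((∑ i, a i) - ∑ k ∈ Finset.range r, (k:ℚ)) * (Matrix.vandermonde a).det := by
  classical
  set V := Matrix.vandermonde a with hV
  set v : ℕ → Fin r → ℚ :=
    fun k j => (Polynomial.X * (Polynomial.X - 1) ^ (j:ℕ) : ℚ[X]).coeff k with hv
  have step1 : ∀ i : Fin r, Matrix.vandermonde (fun k => a k - if k = i then 1 else 0)
      = V.updateRow i (fun j => (a i - 1) ^ (j:ℕ)) := by
    intro i
    ext k j
    rw [Matrix.vandermonde_apply, Matrix.updateRow_apply]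
    by_cases h : k = i
    · subst h; simp
    · simp [h, hV, Matrix.vandermonde_apply]
  have step3 : ∀ i : Fin r, (fun j : Fin r => a i * (a i - 1) ^ (j:ℕ))
      = ∑ k ∈ Finset.range (r+1), (a i)^k • v k := by
    intro i
    funext j
    rw [Finset.sum_apply]
    have hdeg : (Polynomial.X * (Polynomial.X - 1) ^ (j:ℕ) : ℚ[X]).natDegree < r + 1 := by
      rw [natDegree_XXn]; omega
    have := Polynomial.eval_eq_sum_range' hdeg (a i)
    simp only [Polynomial.eval_mul, Polynomial.eval_pow, Polynomial.eval_sub,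
      Polynomial.eval_X, Polynomial.eval_one] at this
    rw [this]
    refine Finset.sum_congr rfl fun k _ => ?_
    simp [hv, mul_comm]
  have step2 : ∑ i, a i * (Matrix.vandermonde (fun k => a k - if k = i then 1 else 0)).det
      = ∑ k ∈ Finset.range (r+1), ∑ l, v k l * (V.updateCol l (fun i => (a i)^k)).det := by
    rw [show ∑ i, a i * (Matrix.vandermonde (fun k => a k - if k = i then 1 else 0)).det
        = ∑ i, ∑ k ∈ Finset.range (r+1), (a i)^k * (V.updateRow i (v k)).det from ?_,
      Finset.sum_comm]
    · refine Finset.sum_congr rfl fun k _ => sum_mul_det_updateRow V _ _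
    · refine Finset.sum_congr rfl fun i _ => ?_
      rw [step1 i, ← Matrix.det_updateRow_smul, ← det_updateRow_finset_sum V i _ _ v]
      congr 1
      rw [← step3 i]
      funext j
      rfl
  rw [step2, Finset.sum_range_succ]
  have hmid : ∀ k ∈ Finset.range r,
      ∑ l, v k l * (V.updateCol l (fun i => (a i)^k)).det = -(k:ℚ) * V.det := by
    intro k hk
    rw [Finset.mem_range] at hk
    rw [Finset.sum_eq_single (⟨k, hk⟩ : Fin r)]
    · have hcol : (fun i => (a i)^k) = fun t => V t ⟨k, hk⟩ := by
        funext t; simp [hV, Matrix.vandermonde_apply]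
      rw [hcol, Matrix.updateCol_eq_self]
      congr 1
      simpa using coeff_XXn_self k
    · intro l _ hl
      have hcol : (fun i => (a i)^k) = fun t => V t ⟨k, hk⟩ := by
        funext t; simp [hV, Matrix.vandermonde_apply]
      rw [hcol, Matrix.det_updateCol_eq_zero (Ne.symm hl), mul_zero]
    · simp
  rw [Finset.sum_congr rfl hmid]
  have hlast : ∑ l, v r l * (V.updateCol l (fun i => (a i)^r)).det
      = (∑ i, a i) * V.det := by
    rw [Finset.sum_eq_single (⟨r-1, by omega⟩ : Fin r)]
    · have hcoe : (v r ⟨r-1, by omega⟩ : ℚ) = 1 := by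
        have h1 := (monic_XXn (r-1)).coeff_natDegree
        rw [natDegree_XXn (r-1)] at h1
        have : r - 1 + 1 = r := by omega
        rw [this] at h1
        simpa [hv] using h1
      rw [hcoe, one_mul]
      exact schur_col hr a hdet
    · intro l _ hl
      have hdegl : ((l:ℕ)) + 1 < r := by
        have := l.isLt
        rcases Nat.lt_or_ge ((l:ℕ)+1) r with h | h
        · exact h
        · exact absurd (Fin.ext (show (l:ℕ) = r - 1 by omega)) hl
      have : v r l = 0 := by
        apply Polynomial.coeff_eq_zero_of_natDegree_lt
        rw [natDegree_XXn]
        omega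
      rw [this, zero_mul]
    · simp
  rw [hlast, ← Finset.sum_mul]
  have : ∑ k ∈ Finset.range r, -(k:ℚ) = -∑ k ∈ Finset.range r, (k:ℚ) := by
    rw [Finset.sum_neg_distrib]
  rw [this]
  ring

lemma prod_pairs {M : Type*} [CommMonoid M] (f : Fin r × Fin r → M) :
    ∏ p ∈ Finset.univ.filter (fun p : Fin r × Fin r => p.1 < p.2), f p
      = ∏ i : Fin r, ∏ j ∈ Finset.Ioi i, f (i, j) := by
  classical
  rw [Finset.prod_filter, Fintype.prod_prod_type]
  refine Finset.prod_congr rfl fun i _ => ?_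
  rw [← Finset.prod_filter]
  congr 1
  ext j
  simp

noncomputable def deltaProd (x : Fin r → ℚ) : ℚ :=
  ∏ p ∈ Finset.univ.filter (fun p : Fin r × Fin r => p.1 < p.2), (x p.1 - x p.2)

lemma deltaProd_eq (x : Fin r → ℚ) :
    deltaProd x = (∏ i : Fin r, ∏ _j ∈ Finset.Ioi i, (-1:ℚ)) * (Matrix.vandermonde x).det := by
  rw [Matrix.det_vandermonde, deltaProd, prod_pairs, ← Finset.prod_mul_distrib]
  refine Finset.prod_congr rfl fun i _ => ?_
  rw [← Finset.prod_mul_distrib]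
  exact Finset.prod_congr rfl fun j _ => by ring

lemma deltaProd_eq_zero {x : Fin r → ℚ} {p q : Fin r} (hpq : p < q) (h : x p = x q) :
    deltaProd x = 0 := by
  rw [deltaProd]
  refine Finset.prod_eq_zero (Finset.mem_filter.2 ⟨Finset.mem_univ (p, q), hpq⟩) ?_
  simp [h]

lemma key_identity (hr : 0 < r) (a : Fin r → ℚ) (hdet : (Matrix.vandermonde a).det ≠ 0) :
    ∑ i, a i * deltaProd (fun k => a k - if k = i then 1 else 0)
      = ((∑ i, a i) - ∑ k ∈ Finset.range r, (k:ℚ)) * deltaProd a := by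
  simp_rw [deltaProd_eq]
  rw [show ∑ i, a i * ((∏ i : Fin r, ∏ _j ∈ Finset.Ioi i, (-1:ℚ))
        * (Matrix.vandermonde (fun k => a k - if k = i then 1 else 0)).det)
      = (∏ i : Fin r, ∏ _j ∈ Finset.Ioi i, (-1:ℚ))
        * ∑ i, a i * (Matrix.vandermonde (fun k => a k - if k = i then 1 else 0)).det by
    rw [Finset.mul_sum]; exact Finset.sum_congr rfl fun i _ => by ring]
  rw [detKey hr a hdet]
  ring

def Pp (N r : ℕ) (m : Fin r → ℕ) (s : Fin N → Fin r) : Prop :=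
  (∀ i : Fin r, steps s N i = m i) ∧
  (∀ k : ℕ, k ≤ N → ∀ i j : Fin r, i ≤ j → steps s k j ≤ steps s k i)

noncomputable def G (N r : ℕ) (m : Fin r → ℕ) : ℕ := Nat.card {s : Fin N → Fin r // Pp N r m s}

lemma steps_eq_sum {N r : ℕ} (s : Fin N → Fin r) (k : ℕ) (i : Fin r) :
    steps s k i = ∑ j : Fin N, if (j:ℕ) < k ∧ s j = i then 1 else 0 := by
  classical
  rw [steps, Finset.card_filter]

lemma sum_steps {N r : ℕ} (s : Fin N → Fin r) : ∑ i, steps s N i = N := by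
  classical
  simp_rw [steps_eq_sum]
  rw [Finset.sum_comm]
  have : ∀ j : Fin N, (∑ i : Fin r, if (j:ℕ) < N ∧ s j = i then 1 else 0) = 1 := by
    intro j
    have hj : ((j:ℕ) < N) := j.isLt
    simp only [hj, true_and]
    simp [Finset.sum_ite_eq' Finset.univ (s j)]
  simp [this]

lemma G_eq_zero_of_sum_ne {N r : ℕ} {m : Fin r → ℕ} (h : ∑ i, m i ≠ N) : G N r m = 0 := by
  have : IsEmpty {s : Fin N → Fin r // Pp N r m s} := by
    refine ⟨fun ⟨s, hs⟩ => h ?_⟩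
    rw [← sum_steps s]
    exact Finset.sum_congr rfl fun i _ => (hs.1 i).symm
  simp [G, Nat.card_of_isEmpty]

lemma G_eq_zero_of_not_anti {N r : ℕ} {m : Fin r → ℕ}
    (h : ¬ ∀ i j : Fin r, i ≤ j → m j ≤ m i) : G N r m = 0 := by
  have : IsEmpty {s : Fin N → Fin r // Pp N r m s} := by
    refine ⟨fun ⟨s, hs⟩ => h fun i j hij => ?_⟩
    rw [← hs.1 i, ← hs.1 j]
    exact hs.2 N le_rfl i j hij
  simp [G, Nat.card_of_isEmpty]

lemma G_zero {r : ℕ} {m : Fin r → ℕ} (hm : ∀ i, m i = 0) : G 0 r m = 1 := by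
  have hsteps : ∀ (s : Fin 0 → Fin r) (k : ℕ) (i : Fin r), steps s k i = 0 := by
    intro s k i
    rw [steps_eq_sum]
    simp
  have : Unique {s : Fin 0 → Fin r // Pp 0 r m s} := by
    refine ⟨⟨⟨fun j => j.elim0, ?_, ?_⟩⟩, ?_⟩
    · intro i; rw [hsteps, hm]
    · intro k _ i j _; rw [hsteps, hsteps]
    · rintro ⟨s, _⟩
      exact Subtype.ext (funext fun j => j.elim0)
  rw [G, Nat.card_unique]

lemma steps_init {M r : ℕ} (s : Fin (M+1) → Fin r) {k : ℕ} (hk : k ≤ M) (i : Fin r) :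
    steps (Fin.init s) k i = steps s k i := by
  rw [steps_eq_sum, steps_eq_sum, Fin.sum_univ_castSucc]
  have hlast : ¬ (((Fin.last M : Fin (M+1)):ℕ) < k ∧ s (Fin.last M) = i) := by
    rw [Fin.val_last]
    exact fun h => absurd h.1 (by omega)
  rw [if_neg hlast, add_zero]
  refine Finset.sum_congr rfl fun j _ => ?_
  simp [Fin.init, Fin.coe_castSucc]
  exact if_congr Iff.rfl rfl rfl

lemma steps_top {M r : ℕ} (s : Fin (M+1) → Fin r) (i : Fin r) :
    steps s (M+1) i = steps s M i + (if s (Fin.last M) = i then 1 else 0) := by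
  rw [steps_eq_sum, steps_eq_sum, Fin.sum_univ_castSucc, Fin.sum_univ_castSucc]
  have h1 : ¬ (((Fin.last M : Fin (M+1)):ℕ) < M ∧ s (Fin.last M) = i) := by
    rw [Fin.val_last]; exact fun h => absurd h.1 (by omega)
  rw [if_neg h1, add_zero]
  congr 1
  · refine Finset.sum_congr rfl fun j _ => ?_
    have : ((j.castSucc : Fin (M+1)):ℕ) = (j:ℕ) := rfl
    have hj := j.isLt
    simp only [this]
    have e1 : ((j:ℕ) < M + 1) := by omega
    have e2 : ((j:ℕ) < M) := hj
    simp [e1, e2]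
  · simp [Fin.val_last]

lemma G_succ {M r : ℕ} (m : Fin r → ℕ) (hm : ∀ i j : Fin r, i ≤ j → m j ≤ m i)
    (hsum : ∑ i, m i = M + 1) :
    G (M+1) r m = ∑ i : Fin r, G M r (Function.update m i (m i - 1)) := by
  classical
  -- forward property: restriction of a path
  have pfwd : ∀ (s : Fin (M+1) → Fin r), Pp (M+1) r m s →
      Pp M r (Function.update m (s (Fin.last M)) (m (s (Fin.last M)) - 1)) (Fin.init s) := by
    intro s hs
    have hfull : ∀ i, steps s M i + (if s (Fin.last M) = i then 1 else 0) = m i := by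
      intro i; rw [← steps_top]; exact hs.1 i
    constructor
    · intro i
      rw [steps_init s le_rfl]
      by_cases h : s (Fin.last M) = i
      · have := hfull i
        rw [if_pos h] at this
        rw [h, Function.update_self]
        omega
      · have := hfull i
        rw [if_neg h] at this
        rw [Function.update_of_ne (fun hh => h hh.symm)]
        omega
    · intro k hk i j hij
      rw [steps_init s hk, steps_init s hk]
      exact hs.2 k (by omega) i j hij
  -- backward property: extension of a path
  have pbwd : ∀ (i₀ : Fin r) (s' : Fin M → Fin r),
      Pp M r (Function.update m i₀ (m i₀ - 1)) s' → Pp (M+1) r m (Fin.snoc s' i₀) := by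
    intro i₀ s' hs'
    have hm1 : 1 ≤ m i₀ := by
      by_contra h
      have h0 : m i₀ = 0 := by omega
      have hupd : Function.update m i₀ (m i₀ - 1) = m := by
        rw [show m i₀ - 1 = m i₀ by omega]
        exact Function.update_eq_self i₀ m
      have hsum' : ∑ i, Function.update m i₀ (m i₀ - 1) i = M := by
        rw [← sum_steps s']
        exact Finset.sum_congr rfl fun i _ => (hs'.1 i).symm
      rw [hupd, hsum] at hsum'
      omega
    have hst : ∀ (k : ℕ), k ≤ M → ∀ i, steps (Fin.snoc s' i₀ : Fin (M+1) → Fin r) k i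
        = steps s' k i := by
      intro k hk i
      rw [← steps_init (Fin.snoc s' i₀) hk, Fin.init_snoc]
    have hfull : ∀ i, steps (Fin.snoc s' i₀ : Fin (M+1) → Fin r) (M+1) i = m i := by
      intro i
      rw [steps_top, hst M le_rfl, hs'.1 i, Fin.snoc_last]
      by_cases h : i₀ = i
      · subst h
        rw [Function.update_self, if_pos rfl]
        omega
      · rw [Function.update_of_ne (fun hh => h hh.symm), if_neg h, add_zero]
    constructor
    · exact hfull
    · intro k hk i j hij
      rcases Nat.lt_or_ge k (M+1) with h | h
      · rw [hst k (by omega), hst k (by omega)]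
        exact hs'.2 k (by omega) i j hij
      · have hkM : k = M + 1 := by omega
        subst hkM
        rw [hfull i, hfull j]
        exact hm i j hij
  -- the bijection
  set f : (Σ i : Fin r, {s' : Fin M → Fin r // Pp M r (Function.update m i (m i - 1)) s'})
      → {s : Fin (M+1) → Fin r // Pp (M+1) r m s} :=
    fun y => ⟨Fin.snoc y.2.1 y.1, pbwd y.1 y.2.1 y.2.2⟩ with hf
  have hbij : Function.Bijective f := by
    constructor
    · rintro ⟨i₁, s₁, h₁⟩ ⟨i₂, s₂, h₂⟩ h
      have hfn : (Fin.snoc s₁ i₁ : Fin (M+1) → Fin r) = Fin.snoc s₂ i₂ :=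
        congrArg Subtype.val h
      have hi : i₁ = i₂ := by
        have := congrFun hfn (Fin.last M)
        rwa [Fin.snoc_last, Fin.snoc_last] at this
      subst hi
      have hs : s₁ = s₂ := by
        have := congrArg Fin.init hfn
        rwa [Fin.init_snoc, Fin.init_snoc] at this
      subst hs
      rfl
    · rintro ⟨s, hs⟩
      refine ⟨⟨s (Fin.last M), ⟨Fin.init s, pfwd s hs⟩⟩, ?_⟩
      exact Subtype.ext (Fin.snoc_init_self s)
  haveI : ∀ i : Fin r, Fintype {s' : Fin M → Fin r // Pp M r (Function.update m i (m i - 1)) s'} :=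
    fun i => Fintype.ofFinite _
  haveI : Fintype {s : Fin (M+1) → Fin r // Pp (M+1) r m s} := Fintype.ofFinite _
  rw [G, ← Nat.card_eq_of_bijective f hbij, Nat.card_eq_fintype_card, Fintype.card_sigma]
  exact Finset.sum_congr rfl fun i _ => by rw [G, Nat.card_eq_fintype_card]

lemma prod_range_add_one (n : ℕ) : ∏ d ∈ Finset.range n, (d+1) = n.factorial := by
  induction n with
  | zero => simp
  | succ n ih => rw [Finset.prod_range_succ, ih, Nat.factorial_succ]; ring

lemma base_prod (r : ℕ) :
    ∏ i : Fin r, Nat.factorial (r - 1 - (i:ℕ))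
      = ∏ p ∈ Finset.univ.filter (fun p : Fin r × Fin r => p.1 < p.2), ((p.2:ℕ) - (p.1:ℕ)) := by
  rw [prod_pairs (M := ℕ) (f := fun p : Fin r × Fin r => (p.2:ℕ) - (p.1:ℕ))]
  refine Finset.prod_congr rfl fun i _ => ?_
  have hrpos : 0 < r := lt_of_le_of_lt (Nat.zero_le _) i.isLt
  rw [← prod_range_add_one (r - 1 - (i:ℕ))]
  refine Finset.prod_bij'
    (fun d _ => (⟨((i:ℕ) + d + 1) % r, Nat.mod_lt _ hrpos⟩ : Fin r))
    (fun j _ => (j:ℕ) - (i:ℕ) - 1) ?_ ?_ ?_ ?_ ?_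
  · intro d hd
    rw [Finset.mem_range] at hd
    rw [Finset.mem_Ioi, Fin.lt_def]
    have := i.isLt
    have hmod : ((i:ℕ) + d + 1) % r = (i:ℕ) + d + 1 := Nat.mod_eq_of_lt (by omega)
    simp only [hmod]
    omega
  · intro j hj
    rw [Finset.mem_Ioi, Fin.lt_def] at hj
    show (j:ℕ) - (i:ℕ) - 1 ∈ Finset.range (r - 1 - (i:ℕ))
    rw [Finset.mem_range]
    have := j.isLt
    omega
  · intro d hd
    rw [Finset.mem_range] at hd
    show ((⟨((i:ℕ) + d + 1) % r, Nat.mod_lt _ hrpos⟩ : Fin r) : ℕ) - (i:ℕ) - 1 = d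
    have := i.isLt
    have hmod : ((i:ℕ) + d + 1) % r = (i:ℕ) + d + 1 := Nat.mod_eq_of_lt (by omega)
    simp only [hmod]
    omega
  · intro j hj
    rw [Finset.mem_Ioi, Fin.lt_def] at hj
    apply Fin.ext
    have := j.isLt
    have hmod : ((i:ℕ) + ((j:ℕ) - (i:ℕ) - 1) + 1) % r
        = (i:ℕ) + ((j:ℕ) - (i:ℕ) - 1) + 1 := Nat.mod_eq_of_lt (by omega)
    simp only [hmod]
    omega
  · intro d hd
    rw [Finset.mem_range] at hd
    show d + 1 = ((⟨((i:ℕ) + d + 1) % r, Nat.mod_lt _ hrpos⟩ : Fin r) : ℕ) - (i:ℕ)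
    have := i.isLt
    have hmod : ((i:ℕ) + d + 1) % r = (i:ℕ) + d + 1 := Nat.mod_eq_of_lt (by omega)
    simp only [Fin.val_mk, hmod]
    omega

lemma cast_c {r : ℕ} (hr : 0 < r) (i : Fin r) :
    ((r - 1 - (i:ℕ) : ℕ) : ℚ) = (r:ℚ) - 1 - ((i:ℕ):ℚ) := by
  have h1 : (i:ℕ) ≤ r - 1 := by have := i.isLt; omega
  have h2 : 1 ≤ r := hr
  rw [Nat.cast_sub h1, Nat.cast_sub h2]
  push_cast
  ring

lemma cast_delta {r : ℕ} (hr : 0 < r) (mm : Fin r → ℕ)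
    (hanti : ∀ i j : Fin r, i ≤ j → mm j ≤ mm i) :
    ((∏ p ∈ Finset.univ.filter (fun p : Fin r × Fin r => p.1 < p.2),
        (mm p.1 - mm p.2 + ((p.2:ℕ) - (p.1:ℕ))) : ℕ) : ℚ)
      = deltaProd (fun i => (mm i : ℚ) + ((r - 1 - (i:ℕ) : ℕ) : ℚ)) := by
  rw [Nat.cast_prod, deltaProd]
  refine Finset.prod_congr rfl fun p hp => ?_
  have hlt : p.1 < p.2 := (Finset.mem_filter.1 hp).2
  have hv : (p.1 : ℕ) < (p.2 : ℕ) := hlt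
  have hmle : mm p.2 ≤ mm p.1 := hanti p.1 p.2 (le_of_lt hlt)
  rw [Nat.cast_add, Nat.cast_sub hmle, Nat.cast_sub (le_of_lt hv),
    cast_c hr p.1, cast_c hr p.2]
  ring

lemma sum_rsub (r : ℕ) :
    ∑ i : Fin r, ((r - 1 - (i:ℕ) : ℕ) : ℚ) = ∑ k ∈ Finset.range r, (k:ℚ) := by
  rw [Fin.sum_univ_eq_sum_range (fun k => ((r - 1 - k : ℕ) : ℚ)) r]
  exact Finset.sum_range_reflect (fun k => (k:ℚ)) r

theorem main_count (N : ℕ) : ∀ (r : ℕ) (m : Fin r → ℕ),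
    (∀ i j : Fin r, i ≤ j → m j ≤ m i) → (∑ i, m i = N) →
    G N r m * ∏ i : Fin r, Nat.factorial (m i + (r - 1 - (i:ℕ)))
      = Nat.factorial N *
        ∏ p ∈ Finset.univ.filter (fun p : Fin r × Fin r => p.1 < p.2),
          (m p.1 - m p.2 + ((p.2:ℕ) - (p.1:ℕ))) := by
  induction N with
  | zero =>
      intro r m hm hsum
      have h0 : ∀ i, m i = 0 := by
        intro i
        have := (Finset.sum_eq_zero_iff.1 hsum) i (Finset.mem_univ i)
        exact this
      rw [G_zero h0, one_mul]
      simp only [h0, Nat.factorial_zero, one_mul, Nat.zero_sub, Nat.sub_zero, zero_add]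
      exact base_prod r
  | succ M ih =>
      intro r m hm hsum
      have hr : 0 < r := by
        rcases Nat.eq_zero_or_pos r with h | h
        · subst h; simp at hsum
        · exact h
      -- notation
      set A : Fin r → ℚ := fun i => (m i : ℚ) + ((r - 1 - (i:ℕ) : ℕ) : ℚ) with hA
      have hcast : ∀ i : Fin r, ((m i + (r - 1 - (i:ℕ)) : ℕ) : ℚ) = A i := by
        intro i; push_cast [hA]; ring
      -- A is strictly decreasing
      have hgt : ∀ i j : Fin r, i < j → A j < A i := by
        intro i j hij
        have h1 : (m j : ℚ) ≤ (m i : ℚ) := by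
          exact_mod_cast hm i j (le_of_lt hij)
        have h2 : ((i:ℕ):ℚ) < ((j:ℕ):ℚ) := by exact_mod_cast hij
        rw [hA]
        simp only
        rw [cast_c hr i, cast_c hr j]
        linarith
      have hdet : (Matrix.vandermonde A).det ≠ 0 := by
        rw [Matrix.det_vandermonde]
        refine Finset.prod_ne_zero_iff.2 fun i _ => Finset.prod_ne_zero_iff.2 fun j hj => ?_
        rw [Finset.mem_Ioi] at hj
        have := hgt i j hj
        intro hzero
        rw [sub_eq_zero] at hzero
        exact absurd hzero (ne_of_lt this)
      -- the zero-column trick for degenerate directions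
      have hzero_delta : ∀ i : Fin r, ∀ h : (i:ℕ) + 1 < r, m (⟨(i:ℕ)+1, h⟩ : Fin r) = m i →
          deltaProd (fun k => A k - if k = i then 1 else 0) = 0 := by
        intro i hi1 hmi
        set i' : Fin r := ⟨(i:ℕ)+1, by omega⟩ with hi'
        have hlt : i < i' := by rw [Fin.lt_def]; simp [hi']
        refine deltaProd_eq_zero hlt ?_
        have hne : i' ≠ i := by
          intro h; have := congrArg Fin.val h; simp [hi'] at this
        rw [if_pos rfl, if_neg hne]
        have e1 : ((r - 1 - (i:ℕ) : ℕ) : ℚ) = (r:ℚ) - 1 - ((i:ℕ):ℚ) := cast_c hr i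
        have e2 : ((r - 1 - ((i':Fin r):ℕ) : ℕ) : ℚ) = (r:ℚ) - 1 - (((i':Fin r):ℕ):ℚ) :=
          cast_c hr i'
        rw [hA]
        simp only
        rw [e1, e2, hmi]
        have : (((i':Fin r):ℕ):ℚ) = ((i:ℕ):ℚ) + 1 := by
          rw [hi']
          push_cast
          ring
        rw [this]
        ring
      -- the per-direction term identity, in ℚ
      have hterm : ∀ i : Fin r,
          (G M r (Function.update m i (m i - 1)) : ℚ)
              * ∏ j : Fin r, ((m j + (r - 1 - (j:ℕ))).factorial : ℚ)
            = (M.factorial : ℚ) * (A i * deltaProd (fun k => A k - if k = i then 1 else 0)) := by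
        intro i
        by_cases hmi0 : m i = 0
        · -- degenerate: no step possible in direction i
          have hupd : Function.update m i (m i - 1) = m := by
            rw [show m i - 1 = m i by omega]
            exact Function.update_eq_self i m
          rw [hupd, G_eq_zero_of_sum_ne (by omega)]
          rw [Nat.cast_zero, zero_mul]
          by_cases hi1 : (i:ℕ) + 1 < r
          · have hmi' : m (⟨(i:ℕ)+1, hi1⟩ : Fin r) = m i := by
              have h1 : m (⟨(i:ℕ)+1, hi1⟩ : Fin r) ≤ m i := by
                apply hm
                rw [Fin.le_def]
                simp
              omega
            rw [hzero_delta i hi1 hmi', mul_zero, mul_zero]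
          · -- i is the last index, A i = 0
            have hilast : (i:ℕ) = r - 1 := by have := i.isLt; omega
            have hAi : A i = 0 := by
              rw [hA]
              simp only
              rw [hmi0, hilast]
              simp
            rw [hAi, zero_mul, mul_zero]
        · -- m i ≥ 1
          have hmi1 : 1 ≤ m i := by omega
          set m' : Fin r → ℕ := Function.update m i (m i - 1) with hm'
          have hsum' : ∑ j, m' j = M := by
            rw [hm', Finset.sum_update_of_mem (Finset.mem_univ i), ← Finset.erase_eq]
            have := Finset.add_sum_erase Finset.univ m (Finset.mem_univ i)
            omega
          by_cases hanti : ∀ p q : Fin r, p ≤ q → m' q ≤ m' p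
          · -- main case: apply induction hypothesis
            have IH := ih r m' hanti hsum'
            -- factorial product relation
            have hprod : ∏ j : Fin r, Nat.factorial (m j + (r - 1 - (j:ℕ)))
                = (m i + (r - 1 - (i:ℕ)))
                  * ∏ j : Fin r, Nat.factorial (m' j + (r - 1 - (j:ℕ))) := by
              rw [← Finset.mul_prod_erase Finset.univ
                  (fun j => Nat.factorial (m j + (r - 1 - (j:ℕ)))) (Finset.mem_univ i),
                ← Finset.mul_prod_erase Finset.univ
                  (fun j => Nat.factorial (m' j + (r - 1 - (j:ℕ)))) (Finset.mem_univ i)]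
              have herase : ∏ j ∈ Finset.univ.erase i, Nat.factorial (m' j + (r - 1 - (j:ℕ)))
                  = ∏ j ∈ Finset.univ.erase i, Nat.factorial (m j + (r - 1 - (j:ℕ))) := by
                refine Finset.prod_congr rfl fun j hj => ?_
                rw [hm', Function.update_of_ne (Finset.ne_of_mem_erase hj)]
              rw [herase]
              have hfac : Nat.factorial (m i + (r - 1 - (i:ℕ)))
                  = (m i + (r - 1 - (i:ℕ))) * Nat.factorial (m' i + (r - 1 - (i:ℕ))) := by
                rw [hm', Function.update_self]
                rw [show m i + (r - 1 - (i:ℕ)) = (m i - 1 + (r - 1 - (i:ℕ))) + 1 by omega]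
                rw [Nat.factorial_succ]
              rw [hfac, mul_assoc]
            -- the delta for m' equals the shifted delta for A
            have hdeltam' : ((∏ p ∈ Finset.univ.filter (fun p : Fin r × Fin r => p.1 < p.2),
                (m' p.1 - m' p.2 + ((p.2:ℕ) - (p.1:ℕ))) : ℕ) : ℚ)
                = deltaProd (fun k => A k - if k = i then 1 else 0) := by
              rw [cast_delta hr m' hanti]
              congr 1
              funext k
              by_cases hk : k = i
              · subst hk
                rw [if_pos rfl, hm', Function.update_self, hA]
                simp only
                rw [Nat.cast_sub hmi1]
                push_cast
                ring
              · rw [if_neg hk, sub_zero, hm', Function.update_of_ne hk, hA]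
            -- put it together
            have hAi : A i = ((m i + (r - 1 - (i:ℕ)) : ℕ) : ℚ) := (hcast i).symm
            calc (G M r m' : ℚ) * ∏ j : Fin r, ((m j + (r - 1 - (j:ℕ))).factorial : ℚ)
                = ((G M r m' * ∏ j : Fin r, (m' j + (r - 1 - (j:ℕ))).factorial : ℕ) : ℚ)
                    * ((m i + (r - 1 - (i:ℕ)) : ℕ) : ℚ) := by
                  rw [← Nat.cast_prod, hprod]
                  push_cast
                  ring
              _ = ((Nat.factorial M *
                    ∏ p ∈ Finset.univ.filter (fun p : Fin r × Fin r => p.1 < p.2),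
                      (m' p.1 - m' p.2 + ((p.2:ℕ) - (p.1:ℕ))) : ℕ) : ℚ)
                    * ((m i + (r - 1 - (i:ℕ)) : ℕ) : ℚ) := by rw [IH]
              _ = (M.factorial : ℚ)
                    * (A i * deltaProd (fun k => A k - if k = i then 1 else 0)) := by
                  rw [Nat.cast_mul, hdeltam', hAi]
                  ring
          · -- m' not antitone: count is zero and delta vanishes
            rw [G_eq_zero_of_not_anti hanti, Nat.cast_zero, zero_mul]
            -- find the violated pair
            push_neg at hanti
            obtain ⟨p, q, hpq, hlt⟩ := hanti
            have hpi : p = i := by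
              by_contra hne
              have hq : q ≠ i := by
                intro h
                subst h
                have h1 : m' q ≤ m' p := by
                  rw [hm', Function.update_self, Function.update_of_ne hne]
                  have := hm p q hpq
                  omega
                omega
              have h1 : m' q ≤ m' p := by
                rw [hm', Function.update_of_ne hne, Function.update_of_ne hq]
                exact hm p q hpq
              omega
            subst hpi
            have hqi : q ≠ p := by
              intro h
              subst h
              omega
            have hpq' : (p:ℕ) < (q:ℕ) := by
              rcases lt_or_eq_of_le hpq with h | h
              · exact h
              · exact absurd h.symm hqi
            have hmq : m q = m p := by
              have h1 : m' p = m p - 1 := by rw [hm', Function.update_self]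
              have h2 : m' q = m q := by rw [hm', Function.update_of_ne hqi]
              have h3 : m q ≤ m p := hm p q hpq
              omega
            have hp1 : (p:ℕ) + 1 < r := by
              have := q.isLt
              omega
            have hmp1 : m (⟨(p:ℕ)+1, hp1⟩ : Fin r) = m p := by
              have h1 : m (⟨(p:ℕ)+1, hp1⟩ : Fin r) ≤ m p := by
                apply hm
                rw [Fin.le_def]
                simp
              have h2 : m q ≤ m (⟨(p:ℕ)+1, hp1⟩ : Fin r) := by
                apply hm
                rw [Fin.le_def]
                simp
                omega
              omega
            rw [hzero_delta p hp1 hmp1, mul_zero, mul_zero]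
      -- now sum over i
      have hQ : ((G (M+1) r m * ∏ i : Fin r, Nat.factorial (m i + (r - 1 - (i:ℕ))) : ℕ) : ℚ)
          = ((Nat.factorial (M+1) *
              ∏ p ∈ Finset.univ.filter (fun p : Fin r × Fin r => p.1 < p.2),
                (m p.1 - m p.2 + ((p.2:ℕ) - (p.1:ℕ))) : ℕ) : ℚ) := by
        rw [Nat.cast_mul, Nat.cast_mul, G_succ m hm hsum]
        rw [Nat.cast_sum, Finset.sum_mul, Nat.cast_prod]
        have : ∀ i ∈ Finset.univ, (G M r (Function.update m i (m i - 1)) : ℚ)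
            * ∏ j : Fin r, ((m j + (r - 1 - (j:ℕ))).factorial : ℚ)
            = (M.factorial : ℚ) * (A i * deltaProd (fun k => A k - if k = i then 1 else 0)) :=
          fun i _ => hterm i
        rw [Finset.sum_congr rfl this, ← Finset.mul_sum]
        rw [key_identity hr A hdet]
        have hAsum : ∑ i, A i = ((M:ℚ) + 1) + ∑ k ∈ Finset.range r, (k:ℚ) := by
          rw [hA, Finset.sum_add_distrib, sum_rsub r]
          congr 1
          rw [← Nat.cast_sum]
          exact_mod_cast congrArg (Nat.cast : ℕ → ℚ) hsum
        rw [hAsum, cast_delta hr m hm]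
        have : ((M+1).factorial : ℚ) = (M.factorial : ℚ) * ((M:ℚ)+1) := by
          rw [Nat.factorial_succ]
          push_cast
          ring
        rw [this]
        ring
      exact_mod_cast hQ

theorem stmt17 (r : ℕ) (hr : 1 ≤ r) (m : Fin r → ℕ)
    (hm : ∀ i j : Fin r, i ≤ j → m j ≤ m i) :
    Nat.card {s : Fin (∑ i, m i) → Fin r //
        (∀ i : Fin r, steps s (∑ i, m i) i = m i) ∧
        (∀ k : ℕ, k ≤ ∑ i, m i → ∀ i j : Fin r, i ≤ j → steps s k j ≤ steps s k i)} *
      ∏ i : Fin r, Nat.factorial (m i + (r - 1 - (i:ℕ)))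
    = Nat.factorial (∑ i, m i) *
      ∏ p ∈ Finset.univ.filter (fun p : Fin r × Fin r => p.1 < p.2),
        (m p.1 - m p.2 + ((p.2 : ℕ) - (p.1 : ℕ))) := by
  have h := main_count (∑ i, m i) r m hm rfl
  exact h
end
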